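/- arXiv:2505.03342 — 5 statements merged into one kernel-verified Lean document; each statement's English description precedes it below -/
import Mathlib

section
/- Let γ be a finite signed measure on R^d and K(x,y) = -|x-y|. Then for every x ∈ R^d, (K⋆γ)(x) = c_d ∫_{S^{d-1}} (K ⋆ (π_θ)_# γ)(x) dσ(θ), where π_θ(y) = ⟨y, θ⟩θ is the orthogonal projection onto the line Rθ, σ is the uniform probability measure on S^{d-1}, and c_d = √π Γ((d+1)/2)/Γ(d/2). -/
open MeasureTheory Metric

section EDAux
open Set Real MeasureTheory.Measure

lemma lemA (n : ℕ) : ∫ r in Ioi (0:ℝ), r ^ n * Real.exp (-r ^ 2)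
    = Real.Gamma ((n + 1) / 2) / 2 := by
  rw [Real.Gamma_eq_integral (by positivity : (0:ℝ) < ((n:ℝ) + 1) / 2)]
  conv_rhs => rw [← integral_comp_rpow_Ioi_of_pos zero_lt_two]
  rw [eq_div_iff (two_ne_zero), ← integral_mul_const]
  refine setIntegral_congr_fun measurableSet_Ioi fun x hx => ?_
  have hx' : (0:ℝ) < x := hx
  have key : (x ^ (2:ℝ)) ^ (((n:ℝ) + 1) / 2 - 1) = x ^ ((n:ℝ) - 1) := by
    rw [← Real.rpow_mul hx'.le]; ring_nf
  have h1 : x ^ ((2:ℝ) - 1) = x := by norm_num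
  have h3 : x * x ^ ((n:ℝ) - 1) = x ^ n := by
    calc x * x ^ ((n:ℝ) - 1) = x ^ ((1:ℝ) + ((n:ℝ) - 1)) := by
          rw [Real.rpow_add hx', Real.rpow_one]
      _ = x ^ ((n:ℝ)) := by ring_nf
      _ = x ^ n := Real.rpow_natCast x n
  have h2 : x ^ (2:ℝ) = x ^ (2:ℕ) := by rw [Real.rpow_two]
  rw [smul_eq_mul, key, h1, h2, ← h3]
  ring

lemma lemB : ∫ x : ℝ, |x| * Real.exp (-x ^ 2) = 1 := by
  have h := integral_comp_abs (f := fun t => t * Real.exp (-t ^ 2))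
  simp only [sq_abs] at h
  rw [h]
  have := lemA 1
  simp only [pow_one] at this
  rw [this]
  norm_num [Real.Gamma_one]

lemma lemC : ∫ x : ℝ, Real.exp (-x ^ 2) = Real.sqrt π := by
  simpa using integral_gaussian 1

lemma polar {E : Type*} [NormedAddCommGroup E] [NormedSpace ℝ E] [MeasurableSpace E]
    [BorelSpace E] [FiniteDimensional ℝ E] [Nontrivial E]
    (μ : Measure E) [μ.IsAddHaarMeasure]
    (F : E → ℝ) (f : sphere (0 : E) 1 → ℝ) (h : ℝ → ℝ)
    (hF : ∀ (θ : sphere (0 : E) 1) (r : ℝ), 0 < r → F (r • (θ : E)) = f θ * h r) :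
    ∫ x, F x ∂μ = (∫ θ, f θ ∂μ.toSphere)
      * ∫ r in Ioi (0:ℝ), r ^ (Module.finrank ℝ E - 1) * h r := by
  have h1 : ∫ x, F x ∂μ = ∫ x : ({(0:E)}ᶜ : Set E), F x.1 ∂(μ.comap (↑)) := by
    rw [integral_subtype_comap (measurableSet_singleton _).compl fun x ↦ F x,
      restrict_compl_singleton]
  have h2 : ∫ x : ({(0:E)}ᶜ : Set E), F x.1 ∂(μ.comap (↑))
      = ∫ p : sphere (0:E) 1 × Ioi (0:ℝ), f p.1 * h p.2.1
          ∂(μ.toSphere.prod (volumeIoiPow (Module.finrank ℝ E - 1))) := by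
    rw [← μ.measurePreserving_homeomorphUnitSphereProd.integral_comp
      (Homeomorph.measurableEmbedding _) (fun p => f p.1 * h p.2.1)]
    refine integral_congr_ae (Filter.Eventually.of_forall fun x => ?_)
    have hx : (x:E) ≠ 0 := x.2
    have hnorm : (0:ℝ) < ‖(x:E)‖ := norm_pos_iff.2 hx
    have := hF ((homeomorphUnitSphereProd E) x).1 ‖(x:E)‖ hnorm
    simp only [homeomorphUnitSphereProd_apply_fst_coe, homeomorphUnitSphereProd_apply_snd_coe]
    rw [homeomorphUnitSphereProd_apply_fst_coe, smul_inv_smul₀ hnorm.ne'] at this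
    exact this
  have h3 : ∫ p : sphere (0:E) 1 × Ioi (0:ℝ), f p.1 * h p.2.1
          ∂(μ.toSphere.prod (volumeIoiPow (Module.finrank ℝ E - 1)))
      = (∫ θ, f θ ∂μ.toSphere) * ∫ r : Ioi (0:ℝ), h r
          ∂(volumeIoiPow (Module.finrank ℝ E - 1)) :=
    integral_prod_mul f (fun r : Ioi (0:ℝ) => h r)
  have h4 : ∫ r : Ioi (0:ℝ), h r ∂(volumeIoiPow (Module.finrank ℝ E - 1))
      = ∫ r in Ioi (0:ℝ), r ^ (Module.finrank ℝ E - 1) * h r := by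
    simp only [Measure.volumeIoiPow, ENNReal.ofReal]
    rw [integral_withDensity_eq_integral_smul
      ((measurable_subtype_coe.pow_const _).real_toNNReal),
      integral_subtype_comap measurableSet_Ioi
        fun a ↦ Real.toNNReal (a ^ (Module.finrank ℝ E - 1)) • h a]
    refine setIntegral_congr_fun measurableSet_Ioi fun x hx => ?_
    rw [NNReal.smul_def, Real.coe_toNNReal _ (pow_nonneg (le_of_lt hx) _), smul_eq_mul]
  rw [h1, h2, h3, h4]

lemma lemD (d : ℕ) (hd : 1 ≤ d) (i₀ : Fin d) :
    ∫ x : EuclideanSpace ℝ (Fin d), |x i₀| * Real.exp (-‖x‖ ^ 2)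
      = Real.sqrt π ^ (d - 1) := by
  have hmp : MeasurePreserving (MeasurableEquiv.toLp 2 (Fin d → ℝ)) volume volume :=
    (EuclideanSpace.volume_preserving_symm_measurableEquiv_toLp (Fin d)).symm
  rw [← hmp.integral_comp']
  have step : ∀ y : Fin d → ℝ,
      |((MeasurableEquiv.toLp 2 (Fin d → ℝ)) y) i₀|
        * Real.exp (-‖(MeasurableEquiv.toLp 2 (Fin d → ℝ)) y‖ ^ 2)
      = ∏ i, ((if i = i₀ then |y i| else 1) * Real.exp (-(y i) ^ 2)) := by
    intro y
    have hcoords : ∀ i, ((MeasurableEquiv.toLp 2 (Fin d → ℝ)) y) i = y i := fun i => rfl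
    have hnorm : ‖(MeasurableEquiv.toLp 2 (Fin d → ℝ)) y‖ ^ 2 = ∑ i, (y i) ^ 2 := by
      rw [EuclideanSpace.norm_eq]
      rw [Real.sq_sqrt (by positivity)]
      simp [hcoords]
    rw [hcoords, hnorm, Finset.prod_mul_distrib]
    rw [Finset.prod_ite_eq' Finset.univ i₀ (fun i => |y i|)]
    rw [← Real.exp_sum]
    simp [Finset.sum_neg_distrib]
  calc ∫ y : Fin d → ℝ, |((MeasurableEquiv.toLp 2 (Fin d → ℝ)) y) i₀|
        * Real.exp (-‖(MeasurableEquiv.toLp 2 (Fin d → ℝ)) y‖ ^ 2)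
      = ∫ y : Fin d → ℝ, ∏ i, ((if i = i₀ then |y i| else 1) * Real.exp (-(y i) ^ 2)) := by
        simp_rw [step]
    _ = ∏ i : Fin d, ∫ t : ℝ, (if i = i₀ then |t| else 1) * Real.exp (-t ^ 2) := by
        exact MeasureTheory.integral_fintype_prod_eq_prod
          (fun i t => (if i = i₀ then |t| else 1) * Real.exp (-t ^ 2))
    _ = Real.sqrt π ^ (d - 1) := by
        have hval : ∀ i : Fin d, (∫ t : ℝ, (if i = i₀ then |t| else 1) * Real.exp (-t ^ 2))
            = if i = i₀ then 1 else Real.sqrt π := by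
          intro i
          by_cases h : i = i₀ <;> simp only [h, if_true, if_false, one_mul]
          · exact lemB
          · exact lemC
        simp_rw [hval]
        rw [← Finset.mul_prod_erase Finset.univ _ (Finset.mem_univ i₀)]
        rw [if_pos rfl, one_mul]
        rw [Finset.prod_congr rfl (fun i hi => if_neg (Finset.ne_of_mem_erase hi))]
        rw [Finset.prod_const, Finset.card_erase_of_mem (Finset.mem_univ i₀), Finset.card_univ,
          Fintype.card_fin]

lemma lemE (d : ℕ) (hd : 1 ≤ d) (v : EuclideanSpace ℝ (Fin d)) :
    ∫ x : EuclideanSpace ℝ (Fin d),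
        |(inner ℝ v x : ℝ)| * Real.exp (-‖x‖ ^ 2)
      = ‖v‖ * Real.sqrt π ^ (d - 1) := by
  rcases eq_or_ne v 0 with rfl | hv
  · simp [inner_zero_left]
  · have i₀ : Fin d := ⟨0, hd⟩
    set w : EuclideanSpace ℝ (Fin d) := ‖v‖ • EuclideanSpace.single i₀ (1:ℝ) with hw
    have hnw : ‖w‖ = ‖v‖ := by
      rw [hw, norm_smul, EuclideanSpace.norm_single, norm_one, norm_norm, mul_one]
    set T := Submodule.reflection (ℝ ∙ (w - v))ᗮ with hT
    have hTw : T w = v := Submodule.reflection_sub hnw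
    have hmp : MeasurePreserving (⇑T) (volume : Measure (EuclideanSpace ℝ (Fin d))) volume :=
      T.measurePreserving
    have hcomp := hmp.integral_comp (T.toHomeomorph.measurableEmbedding)
      (fun x : EuclideanSpace ℝ (Fin d) => |(inner ℝ v x : ℝ)| * Real.exp (-‖x‖ ^ 2))
    rw [← hcomp]
    have : ∀ x : EuclideanSpace ℝ (Fin d), |(inner ℝ v (T x) : ℝ)| * Real.exp (-‖T x‖ ^ 2)
        = ‖v‖ * (|x i₀| * Real.exp (-‖x‖ ^ 2)) := by
      intro x
      rw [← hTw, LinearIsometryEquiv.inner_map_map, T.norm_map, hTw]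
      rw [hw, real_inner_smul_left, EuclideanSpace.inner_single_left]
      simp [abs_mul, abs_of_nonneg (norm_nonneg v), mul_assoc]
    simp_rw [this]
    rw [integral_const_mul, lemD d hd i₀]

lemma lemG (d : ℕ) (hd : 1 ≤ d) (v : EuclideanSpace ℝ (Fin d)) :
    ∫ θ : sphere (0 : EuclideanSpace ℝ (Fin d)) 1,
        |(inner ℝ v (θ : EuclideanSpace ℝ (Fin d)) : ℝ)|
        ∂((volume : Measure (EuclideanSpace ℝ (Fin d))).toSphere)
      = ‖v‖ * (2 * Real.sqrt π ^ (d - 1) / Real.Gamma ((d + 1) / 2)) := by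
  haveI : Nonempty (Fin d) := ⟨⟨0, hd⟩⟩
  haveI : Nontrivial (EuclideanSpace ℝ (Fin d)) := inferInstance
  have hpolar := polar (volume : Measure (EuclideanSpace ℝ (Fin d)))
    (fun x => |(inner ℝ v x : ℝ)| * Real.exp (-‖x‖ ^ 2))
    (fun θ => |(inner ℝ v (θ : EuclideanSpace ℝ (Fin d)) : ℝ)|)
    (fun r => r * Real.exp (-r ^ 2))
    (by
      intro θ r hr
      have hθ : ‖(θ : EuclideanSpace ℝ (Fin d))‖ = 1 := mem_sphere_zero_iff_norm.mp θ.2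
      show |(inner ℝ v (r • (θ : EuclideanSpace ℝ (Fin d))) : ℝ)| * Real.exp (-‖r • (θ : EuclideanSpace ℝ (Fin d))‖ ^ 2) = _
      rw [real_inner_smul_right, norm_smul, hθ, mul_one, Real.norm_eq_abs,
        abs_of_pos hr, abs_mul, abs_of_pos hr]
      ring)
  rw [lemE d hd v] at hpolar
  have hrank : Module.finrank ℝ (EuclideanSpace ℝ (Fin d)) = d := finrank_euclideanSpace_fin
  rw [hrank] at hpolar
  have hint : ∫ r in Ioi (0:ℝ), r ^ (d - 1) * (r * Real.exp (-r ^ 2))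
      = Real.Gamma ((d + 1) / 2) / 2 := by
    rw [← lemA d]
    refine setIntegral_congr_fun measurableSet_Ioi fun x hx => ?_
    rw [← mul_assoc, ← pow_succ, Nat.sub_add_cancel hd]
  rw [hint] at hpolar
  have hΓ : 0 < Real.Gamma (((d:ℝ) + 1) / 2) := Real.Gamma_pos_of_pos (by positivity)
  field_simp at hpolar ⊢
  linarith [hpolar]


end EDAux

/-- The convolution of the Energy-Distance kernel `K(x,y) = -|x-y|` with a finite
signed measure `γ = g·μ` equals `c_d` times the average over directions
`θ ∈ S^{d-1}` of the one-dimensional convolutions with the projected measures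
`(π_θ)_# γ`, i.e. `(K⋆γ)(x) = c_d ∫_{S^{d-1}} ∫ -|⟨x-z,θ⟩| dγ(z) dσ(θ)`. -/

theorem ed_convolution_sliced (d : ℕ) (hd : 1 ≤ d)
    (μ : Measure (EuclideanSpace ℝ (Fin d))) [IsFiniteMeasure μ]
    (g : EuclideanSpace ℝ (Fin d) → ℝ) (hg : Integrable g μ)
    (hg' : Integrable (fun z => ‖z‖ * |g z|) μ)
    (x : EuclideanSpace ℝ (Fin d)) :
    ∫ z, -‖x - z‖ * g z ∂μ =
      (Real.sqrt Real.pi * Real.Gamma ((d + 1) / 2) / Real.Gamma (d / 2)) *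
        ⨍ θ : sphere (0 : EuclideanSpace ℝ (Fin d)) 1,
          (∫ z, -|(inner ℝ (x - z) (θ : EuclideanSpace ℝ (Fin d)) : ℝ)| * g z ∂μ)
            ∂((volume : Measure (EuclideanSpace ℝ (Fin d))).toSphere) := by
  haveI : Nonempty (Fin d) := ⟨⟨0, hd⟩⟩
  set σ := (volume : Measure (EuclideanSpace ℝ (Fin d))).toSphere with hσ
  set κ := 2 * Real.sqrt Real.pi ^ (d - 1) / Real.Gamma (((d:ℝ) + 1) / 2) with hκ
  -- integrability on the product
  have hInt : Integrable (Function.uncurry fun (θ : sphere (0:EuclideanSpace ℝ (Fin d)) 1) (z : EuclideanSpace ℝ (Fin d)) =>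
      -|(inner ℝ (x - z) (θ : EuclideanSpace ℝ (Fin d)) : ℝ)| * g z) (σ.prod μ) := by
    have hc : Continuous fun p : sphere (0:EuclideanSpace ℝ (Fin d)) 1 × EuclideanSpace ℝ (Fin d) => -|(inner ℝ (x - p.2) (p.1 : EuclideanSpace ℝ (Fin d)) : ℝ)| :=
      (((continuous_const.sub continuous_snd).inner
        (continuous_subtype_val.comp continuous_fst)).abs).neg
    have hm2 : AEStronglyMeasurable (fun p : sphere (0:EuclideanSpace ℝ (Fin d)) 1 × EuclideanSpace ℝ (Fin d) => g p.2) (σ.prod μ) := hg.1.comp_quasiMeasurePreserving Measure.quasiMeasurePreserving_snd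
    have hm : AEStronglyMeasurable (Function.uncurry fun (θ : sphere (0:EuclideanSpace ℝ (Fin d)) 1) (z : EuclideanSpace ℝ (Fin d)) =>
        -|(inner ℝ (x - z) (θ : EuclideanSpace ℝ (Fin d)) : ℝ)| * g z) (σ.prod μ) :=
      hc.aestronglyMeasurable.mul hm2
    have hB : Integrable (fun p : sphere (0:EuclideanSpace ℝ (Fin d)) 1 × EuclideanSpace ℝ (Fin d) =>
        (1:ℝ) * ((‖x‖ + ‖p.2‖) * |g p.2|)) (σ.prod μ) := by
      have hB2 : Integrable (fun z : EuclideanSpace ℝ (Fin d) => (‖x‖ + ‖z‖) * |g z|) μ := by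
        have : (fun z : EuclideanSpace ℝ (Fin d) => (‖x‖ + ‖z‖) * |g z|)
          = fun z : EuclideanSpace ℝ (Fin d) => ‖x‖ * |g z| + ‖z‖ * |g z| := by funext z; ring
        rw [this]
        exact (hg.abs.const_mul ‖x‖).add hg'
      exact Integrable.mul_prod (μ := σ) (ν := μ) (integrable_const (1:ℝ)) hB2
    refine hB.mono' hm (Filter.Eventually.of_forall fun p => ?_)
    have h1 : |(inner ℝ (x - p.2) (p.1 : EuclideanSpace ℝ (Fin d)) : ℝ)| ≤ ‖x - p.2‖ := by
      have := abs_real_inner_le_norm (x - p.2) (p.1 : EuclideanSpace ℝ (Fin d))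
      rwa [mem_sphere_zero_iff_norm.mp p.1.2, mul_one] at this
    have h2 : ‖x - p.2‖ ≤ ‖x‖ + ‖p.2‖ := norm_sub_le _ _
    calc ‖Function.uncurry (fun (θ : sphere (0:EuclideanSpace ℝ (Fin d)) 1) (z : EuclideanSpace ℝ (Fin d)) =>
            -|(inner ℝ (x - z) (θ : EuclideanSpace ℝ (Fin d)) : ℝ)| * g z) p‖
        = |(inner ℝ (x - p.2) (p.1 : EuclideanSpace ℝ (Fin d)) : ℝ)| * |g p.2| := by
          simp [Function.uncurry, abs_mul]
      _ ≤ (‖x‖ + ‖p.2‖) * |g p.2| :=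
          mul_le_mul_of_nonneg_right (h1.trans h2) (abs_nonneg _)
      _ = 1 * ((‖x‖ + ‖p.2‖) * |g p.2|) := by ring
  -- swap the integrals
  have hswap : ∫ θ : sphere (0:EuclideanSpace ℝ (Fin d)) 1, (∫ z, -|(inner ℝ (x - z) (θ : EuclideanSpace ℝ (Fin d)) : ℝ)| * g z ∂μ) ∂σ
      = ∫ z, (∫ θ : sphere (0:EuclideanSpace ℝ (Fin d)) 1, -|(inner ℝ (x - z) (θ : EuclideanSpace ℝ (Fin d)) : ℝ)| * g z ∂σ) ∂μ :=
    integral_integral_swap hInt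
  -- inner sphere integral via the key identity
  have hinner : ∀ z : EuclideanSpace ℝ (Fin d), (∫ θ : sphere (0:EuclideanSpace ℝ (Fin d)) 1, -|(inner ℝ (x - z) (θ : EuclideanSpace ℝ (Fin d)) : ℝ)| * g z ∂σ)
      = κ * (-‖x - z‖ * g z) := by
    intro z
    have : (fun θ : sphere (0:EuclideanSpace ℝ (Fin d)) 1 => -|(inner ℝ (x - z) (θ : EuclideanSpace ℝ (Fin d)) : ℝ)| * g z)
        = fun θ : sphere (0:EuclideanSpace ℝ (Fin d)) 1 => |(inner ℝ (x - z) (θ : EuclideanSpace ℝ (Fin d)) : ℝ)| * (-(g z)) := by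
      funext θ; ring
    rw [this, integral_mul_const, lemG d hd (x - z)]
    ring
  -- total mass of the sphere measure
  have hS : (σ Set.univ).toReal = d * (Real.sqrt Real.pi ^ d / Real.Gamma (d / 2 + 1)) := by
    rw [hσ, Measure.toSphere_apply_univ, EuclideanSpace.volume_ball]
    rw [finrank_euclideanSpace_fin]
    simp only [ENNReal.ofReal_one, one_pow, one_mul, Fintype.card_fin]
    rw [ENNReal.toReal_mul, ENNReal.toReal_natCast,
      ENNReal.toReal_ofReal (by positivity)]
  rw [average_eq, hswap]
  simp_rw [hinner]
  rw [integral_const_mul, measureReal_def, hS, smul_eq_mul]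
  have hΓ1 : 0 < Real.Gamma (((d:ℝ) + 1) / 2) := Real.Gamma_pos_of_pos (by positivity)
  have hΓ2 : 0 < Real.Gamma ((d:ℝ) / 2) := Real.Gamma_pos_of_pos (by positivity)
  have hΓ3 : Real.Gamma ((d:ℝ) / 2 + 1) = ((d:ℝ) / 2) * Real.Gamma ((d:ℝ) / 2) :=
    Real.Gamma_add_one (by positivity)
  have hsπ : Real.sqrt Real.pi ^ d = Real.sqrt Real.pi ^ (d - 1) * Real.sqrt Real.pi := by
    rw [← pow_succ, Nat.sub_add_cancel hd]
  have hd0 : (0:ℝ) < d := by exact_mod_cast hd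
  have hπ : (0:ℝ) < Real.sqrt Real.pi := Real.sqrt_pos.mpr Real.pi_pos
  rw [hκ, hΓ3, hsπ]
  field_simp
end

section
/- Let K(x,y) = -|x-y| on R^d, let X = (x_1,…,x_n) be distinct points, and let C_X = {γ ∈ R^n : Σ_i γ_i = 0}. Then for every nonzero γ ∈ C_X, the quadratic form Σ_{i,j} γ_i γ_j K(x_i, x_j) is strictly positive. -/
open MeasureTheory Set

lemma ed_oneD {n : ℕ} (s : Fin n → ℝ) (hs : Function.Injective s)
    (γ : Fin n → ℝ) (hsum : ∑ i, γ i = 0) (hγ : γ ≠ 0) :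
    0 < ∑ i, ∑ j, γ i * γ j * (-|s i - s j|) := by
  classical
  set F : ℝ → ℝ := fun u => ∑ i, if s i ≤ u then γ i else 0 with hF
  -- pointwise identity
  have key : ∀ u, F u ^ 2 = ∑ i, ∑ j,
      Set.indicator (Set.Ico (s i) (s j)) (fun _ => -(γ i * γ j)) u := by
    intro u
    have h1 : (∑ j, if u < s j then γ j else 0) = - F u := by
      have : F u + (∑ j, if u < s j then γ j else 0) = ∑ j, γ j := by
        rw [hF, ← Finset.sum_add_distrib]
        refine Finset.sum_congr rfl fun j _ => ?_
        by_cases h : s j ≤ u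
        · simp [h, not_lt.mpr h]
        · simp [h, lt_of_not_ge h]
      rw [hsum] at this; linarith
    have h2 : F u ^ 2 = -(F u * ∑ j, if u < s j then γ j else 0) := by
      rw [h1]; ring
    rw [h2, hF, Finset.sum_mul_sum, ← Finset.sum_neg_distrib]
    · refine Finset.sum_congr rfl fun i _ => ?_
      rw [← Finset.sum_neg_distrib]
      refine Finset.sum_congr rfl fun j _ => ?_
      by_cases hij : u ∈ Set.Ico (s i) (s j)
      · rw [Set.indicator_of_mem hij]
        simp [hij.1, hij.2]
      · rw [Set.indicator_of_notMem hij]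
        rw [Set.mem_Ico, not_and_or] at hij
        rcases hij with h | h
        · simp [h]
        · simp [h]
  have hindint : ∀ (a b c : ℝ),
      Integrable (Set.indicator (Set.Ico a b) (fun _ => c)) volume :=
    fun a b c => (integrable_indicator_iff measurableSet_Ico).2
      (integrableOn_const measure_Ico_lt_top.ne)
  have hindval : ∀ (a b c : ℝ),
      ∫ u, Set.indicator (Set.Ico a b) (fun _ => c) u = c * max (b - a) 0 := by
    intro a b c
    rw [integral_indicator_const c measurableSet_Ico, Real.volume_real_Ico,
      smul_eq_mul, mul_comm]
  have hF2eq : (fun u => F u ^ 2) = fun u => ∑ i, ∑ j,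
      Set.indicator (Set.Ico (s i) (s j)) (fun _ => -(γ i * γ j)) u := funext key
  have hF2int : Integrable (fun u => F u ^ 2) volume := by
    rw [hF2eq]
    exact integrable_finset_sum _ fun i _ => integrable_finset_sum _ fun j _ => hindint _ _ _
  -- integral value
  have hIval : (∫ u, F u ^ 2) = ∑ i, ∑ j, -(γ i * γ j) * max (s j - s i) 0 := by
    rw [hF2eq, integral_finset_sum _ (fun i _ => integrable_finset_sum _ fun j _ => hindint _ _ _)]
    refine Finset.sum_congr rfl fun i _ => ?_
    rw [integral_finset_sum _ (fun j _ => hindint _ _ _)]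
    exact Finset.sum_congr rfl fun j _ => hindval _ _ _
  -- symmetrization
  have hmain : ∑ i, ∑ j, γ i * γ j * (-|s i - s j|)
      = 2 * ∑ i, ∑ j, -(γ i * γ j) * max (s j - s i) 0 := by
    have habs : ∀ a b : ℝ, |a - b| = max (a - b) 0 + max (b - a) 0 := by
      intro a b
      rcases le_total a b with h | h
      · rw [abs_of_nonpos (by linarith), max_eq_right (by linarith),
          max_eq_left (by linarith)]; ring
      · rw [abs_of_nonneg (by linarith), max_eq_left (by linarith),
          max_eq_right (by linarith)]; ring
    have step1 : ∑ i, ∑ j, γ i * γ j * (-|s i - s j|)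
        = (∑ i, ∑ j, -(γ i * γ j) * max (s j - s i) 0)
          + ∑ i, ∑ j, -(γ i * γ j) * max (s i - s j) 0 := by
      rw [← Finset.sum_add_distrib]
      refine Finset.sum_congr rfl fun i _ => ?_
      rw [← Finset.sum_add_distrib]
      refine Finset.sum_congr rfl fun j _ => ?_
      rw [habs]; ring
    have step2 : (∑ i, ∑ j, -(γ i * γ j) * max (s i - s j) 0)
        = ∑ i, ∑ j, -(γ i * γ j) * max (s j - s i) 0 := by
      rw [Finset.sum_comm]
      refine Finset.sum_congr rfl fun i _ => ?_
      refine Finset.sum_congr rfl fun j _ => ?_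
      ring_nf
    rw [step1, step2]; ring
  -- strict positivity of ∫ F²
  set T : Finset (Fin n) := Finset.univ.filter (fun i => γ i ≠ 0) with hT
  have hTne : T.Nonempty := by
    obtain ⟨i, hi⟩ := Function.ne_iff.1 hγ
    exact ⟨i, by simp [hT]; simpa using hi⟩
  obtain ⟨i0, hi0T, hi0min⟩ := T.exists_min_image s hTne
  have hsumT : ∑ i ∈ T, γ i = 0 := by
    rw [← hsum]; exact Finset.sum_filter_of_ne (fun i _ h => h)
  have h2 : ∃ j ∈ T, j ≠ i0 := by
    by_contra h
    push_neg at h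
    have h3 : ∑ i ∈ T, γ i = γ i0 :=
      Finset.sum_eq_single_of_mem i0 hi0T (fun j hj hne => absurd (h j hj) hne)
    rw [hsumT] at h3
    have : γ i0 ≠ 0 := by simpa [hT] using hi0T
    exact this h3.symm
  obtain ⟨j1, hj1T, hj1ne⟩ := h2
  obtain ⟨j0, hj0, hj0min⟩ := (T.erase i0).exists_min_image s
    ⟨j1, Finset.mem_erase.2 ⟨hj1ne, hj1T⟩⟩
  have hj0T : j0 ∈ T := Finset.mem_of_mem_erase hj0
  have hij : s i0 < s j0 := by
    rcases lt_or_eq_of_le (hi0min j0 hj0T) with h | h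
    · exact h
    · exact absurd (hs h) (Finset.ne_of_mem_erase hj0).symm
  have hFu : ∀ u ∈ Set.Ico (s i0) (s j0), F u = γ i0 := by
    intro u hu
    show (∑ i, if s i ≤ u then γ i else 0) = γ i0
    rw [Finset.sum_eq_single i0 (fun j _ hne => ?_) (fun h => absurd (Finset.mem_univ i0) h)]
    · simp [hu.1]
    · by_cases hj : γ j = 0
      · simp [hj]
      · have hjT : j ∈ T.erase i0 := Finset.mem_erase.2 ⟨hne, by simp [hT, hj]⟩
        have : ¬ s j ≤ u := not_le.2 (lt_of_lt_of_le hu.2 (hj0min j hjT))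
        simp [this]
  have hle : ∀ u, Set.indicator (Set.Ico (s i0) (s j0)) (fun _ => γ i0 ^ 2) u ≤ F u ^ 2 := by
    intro u
    by_cases hu : u ∈ Set.Ico (s i0) (s j0)
    · rw [Set.indicator_of_mem hu, hFu u hu]
    · rw [Set.indicator_of_notMem hu]; exact sq_nonneg _
  have hIpos : 0 < ∫ u, F u ^ 2 := by
    have hmono := integral_mono (hindint (s i0) (s j0) (γ i0 ^ 2)) hF2int hle
    rw [hindval] at hmono
    refine lt_of_lt_of_le ?_ hmono
    have hγ0 : γ i0 ≠ 0 := by simpa [hT] using hi0T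
    have : max (s j0 - s i0) 0 = s j0 - s i0 := max_eq_left (by linarith)
    rw [this]
    exact mul_pos (lt_of_le_of_ne (sq_nonneg _) (Ne.symm (pow_ne_zero 2 hγ0))) (by linarith)
  rw [hmain]; linarith


lemma ed_rot {d : ℕ} (hd : 0 < d) (w e : EuclideanSpace ℝ (Fin d))
    (hw : ‖w‖ = 1) (he : ‖e‖ = 1) :
    ∃ f : EuclideanSpace ℝ (Fin d) ≃ₗᵢ[ℝ] EuclideanSpace ℝ (Fin d), f w = e := by
  classical
  set k0 : Fin d := ⟨0, hd⟩
  have hcard : Module.finrank ℝ (EuclideanSpace ℝ (Fin d)) = Fintype.card (Fin d) := by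
    simp [finrank_euclideanSpace_fin]
  have horth : ∀ (v : EuclideanSpace ℝ (Fin d)), ‖v‖ = 1 →
      Orthonormal ℝ (Set.restrict {k0} (fun _ : Fin d => v)) := by
    intro v hv
    refine ⟨fun i => hv, fun i j hij => absurd (Subsingleton.elim i j) hij⟩
  obtain ⟨bw, hbw⟩ := (horth w hw).exists_orthonormalBasis_extension_of_card_eq hcard
  obtain ⟨be, hbe⟩ := (horth e he).exists_orthonormalBasis_extension_of_card_eq hcard
  refine ⟨bw.repr.trans be.repr.symm, ?_⟩
  have h1 : bw k0 = w := hbw k0 rfl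
  have h2 : be k0 = e := hbe k0 rfl
  rw [LinearIsometryEquiv.trans_apply, ← h1, OrthonormalBasis.repr_self,
    OrthonormalBasis.repr_symm_single, h2]

lemma ed_hyp_null {d : ℕ} (v : EuclideanSpace ℝ (Fin d)) (hv : v ≠ 0) :
    volume {u : EuclideanSpace ℝ (Fin d) | (inner ℝ u v : ℝ) = 0} = 0 := by
  have hset : {u : EuclideanSpace ℝ (Fin d) | (inner ℝ u v : ℝ) = 0}
      = ((ℝ ∙ v)ᗮ : Submodule ℝ (EuclideanSpace ℝ (Fin d))) := by
    ext u
    rw [Set.mem_setOf_eq, SetLike.mem_coe, Submodule.mem_orthogonal_singleton_iff_inner_right,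
      real_inner_comm]
  rw [hset]
  refine Measure.addHaar_submodule _ _ ?_
  intro h
  have hv2 : v ∈ ((ℝ ∙ v)ᗮ : Submodule ℝ (EuclideanSpace ℝ (Fin d))) := h ▸ Submodule.mem_top
  rw [Submodule.mem_orthogonal_singleton_iff_inner_right] at hv2
  exact hv (inner_self_eq_zero.1 hv2)

lemma ed_ball_inner {d : ℕ} (hd : 0 < d) (v : EuclideanSpace ℝ (Fin d)) :
    ∫ u in Metric.closedBall (0 : EuclideanSpace ℝ (Fin d)) 1, |(inner ℝ u v : ℝ)|
      = (∫ u in Metric.closedBall (0 : EuclideanSpace ℝ (Fin d)) 1,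
          |(inner ℝ u (EuclideanSpace.single (⟨0, hd⟩ : Fin d) (1:ℝ)) : ℝ)|) * ‖v‖ := by
  classical
  set B := Metric.closedBall (0 : EuclideanSpace ℝ (Fin d)) 1 with hB
  set e : EuclideanSpace ℝ (Fin d) := EuclideanSpace.single (⟨0, hd⟩ : Fin d) (1:ℝ) with he
  rcases eq_or_ne v 0 with rfl | hv
  · simp
  have hnv : ‖v‖ ≠ 0 := norm_ne_zero_iff.2 hv
  set w : EuclideanSpace ℝ (Fin d) := ‖v‖⁻¹ • v with hw
  have hwn : ‖w‖ = 1 := norm_smul_inv_norm hv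
  have hen : ‖e‖ = 1 := by rw [he, EuclideanSpace.norm_single]; exact norm_one
  obtain ⟨f, hf⟩ := ed_rot hd w e hwn hen
  have hvw : v = ‖v‖ • w := by rw [hw, smul_inv_smul₀ hnv]
  have step1 : ∀ u : EuclideanSpace ℝ (Fin d),
      |(inner ℝ u v : ℝ)| = ‖v‖ * |(inner ℝ u w : ℝ)| := by
    intro u
    rw [hvw, real_inner_smul_right, abs_mul, abs_of_nonneg (norm_nonneg v), ← hvw]
  have step2 : ∀ u : EuclideanSpace ℝ (Fin d),
      (inner ℝ u w : ℝ) = (inner ℝ (f u) e : ℝ) := by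
    intro u
    rw [← hf, LinearIsometryEquiv.inner_map_map]
  have hpre : f ⁻¹' B = B := by
    ext u
    simp [hB, Metric.mem_closedBall, dist_zero_right, f.norm_map]
  have step3 : ∫ u in B, |(inner ℝ u w : ℝ)| = ∫ u in B, |(inner ℝ u e : ℝ)| := by
    calc ∫ u in B, |(inner ℝ u w : ℝ)| = ∫ u in f ⁻¹' B, |(inner ℝ (f u) e : ℝ)| := by
          rw [hpre]
          exact setIntegral_congr_fun (measurableSet_closedBall)
            (fun u _ => by rw [step2])
      _ = ∫ u in B, |(inner ℝ u e : ℝ)| :=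
          f.measurePreserving.setIntegral_preimage_emb
            f.toHomeomorph.measurableEmbedding (fun y => |(inner ℝ y e : ℝ)|) B
  calc ∫ u in B, |(inner ℝ u v : ℝ)| = ∫ u in B, ‖v‖ * |(inner ℝ u w : ℝ)| :=
        setIntegral_congr_fun measurableSet_closedBall (fun u _ => step1 u)
    _ = ‖v‖ * ∫ u in B, |(inner ℝ u w : ℝ)| := integral_const_mul _ _
    _ = (∫ u in B, |(inner ℝ u e : ℝ)|) * ‖v‖ := by rw [step3]; ring



/-- Conditional positive definiteness of the Energy-Distance kernel
`K(x,y) = -|x-y|`: for distinct points and nonzero zero-sum coefficients, the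
quadratic form `Σ_{i,j} γ_i γ_j K(x_i,x_j)` is strictly positive. -/
theorem ed_kernel_conditionally_positive_definite (d n : ℕ)
    (x : Fin n → EuclideanSpace ℝ (Fin d)) (hx : Function.Injective x)
    (γ : Fin n → ℝ) (hsum : ∑ i, γ i = 0) (hγ : γ ≠ 0) :
    0 < ∑ i, ∑ j, γ i * γ j * (-(dist (x i) (x j))) := by
  classical
  rcases Nat.eq_zero_or_pos d with rfl | hd
  · -- degenerate case d = 0
    exfalso
    apply hγ
    funext i
    have hsub : ∀ a b : Fin n, a = b := fun a b => hx (Subsingleton.elim _ _)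
    have : ∑ j, γ j = ∑ j : Fin n, γ i :=
      Finset.sum_congr rfl fun j _ => by rw [hsub j i]
    rw [hsum, Finset.sum_const, Finset.card_univ, Fintype.card_fin] at this
    have hn : (n : ℝ) ≠ 0 := Nat.cast_ne_zero.2 i.pos.ne'
    rw [nsmul_eq_mul] at this
    have := mul_eq_zero.1 this.symm
    simp only [Pi.zero_apply]
    tauto
  · -- main case d ≥ 1
    let E := EuclideanSpace ℝ (Fin d)
    set B := Metric.closedBall (0 : E) 1 with hB
    set μ : Measure E := volume.restrict B with hμ
    set e : E := EuclideanSpace.single (⟨0, hd⟩ : Fin d) (1:ℝ) with he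
    have hen : ‖e‖ = 1 := by rw [he, EuclideanSpace.norm_single]; exact norm_one
    have hene : e ≠ 0 := by intro h; rw [h, norm_zero] at hen; exact one_ne_zero hen.symm
    set c : ℝ := ∫ u in B, |(inner ℝ u e : ℝ)| with hc
    -- continuity helper
    have hcont : ∀ v : E, Continuous (fun u : E => |(inner ℝ u v : ℝ)|) := fun v =>
      (continuous_id.inner continuous_const).abs
    have hconte : ∀ v : E, IntegrableOn (fun u : E => |(inner ℝ u v : ℝ)|) B volume := fun v =>
      ((hcont v).continuousOn).integrableOn_compact (isCompact_closedBall 0 1)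
    have hμuniv : 0 < μ Set.univ := by
      rw [hμ, Measure.restrict_apply_univ]
      exact Metric.measure_closedBall_pos volume (0 : E) one_pos
    -- c > 0
    have hcpos : 0 < c := by
      rw [hc]
      refine (integral_pos_iff_support_of_nonneg (fun u => abs_nonneg _) (hconte e)).2 ?_
      have hsupp : Function.support (fun u : E => |(inner ℝ u e : ℝ)|)
          = {u : E | (inner ℝ u e : ℝ) = 0}ᶜ := by
        ext u; simp [Function.mem_support, abs_ne_zero]
      rw [hsupp]
      have hH : μ {u : E | (inner ℝ u e : ℝ) = 0} = 0 :=
        measure_mono_null (fun u hu => hu) (by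
          rw [hμ]
          exact le_antisymm (le_trans (Measure.restrict_apply_le _ _) (ed_hyp_null e hene).le)
            (zero_le ..))
      by_contra hle
      push_neg at hle
      have h0 : μ {u : E | (inner ℝ u e : ℝ) = 0}ᶜ = 0 := le_antisymm hle (zero_le ..)
      have := measure_union_le (μ := μ) {u : E | (inner ℝ u e : ℝ) = 0}
        ({u : E | (inner ℝ u e : ℝ) = 0}ᶜ)
      rw [Set.union_compl_self, hH, h0, add_zero] at this
      exact absurd (le_antisymm this (zero_le ..)) hμuniv.ne'
    -- bad set
    set N : Set E := ⋃ (p : Fin n × Fin n) (_ : p.1 ≠ p.2),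
      {u : E | (inner ℝ u (x p.1 - x p.2) : ℝ) = 0} with hN
    have hNnull : volume N = 0 := by
      rw [hN]
      refine measure_iUnion_null fun p => measure_iUnion_null fun hp => ?_
      exact ed_hyp_null _ (sub_ne_zero.2 fun h => hp (hx h))
    have hNμ : μ N = 0 := by
      rw [hμ]
      exact le_antisymm (le_trans (Measure.restrict_apply_le _ _) hNnull.le) (zero_le ..)
    -- the function g
    set g : E → ℝ := fun u => ∑ i, ∑ j,
      γ i * γ j * (-|(inner ℝ u (x i) : ℝ) - (inner ℝ u (x j) : ℝ)|) with hg
    have hgpos : ∀ u ∉ N, 0 < g u := by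
      intro u hu
      have hsinj : Function.Injective (fun i => (inner ℝ u (x i) : ℝ)) := by
        intro i j hij
        by_contra hne
        apply hu
        rw [hN]
        refine Set.mem_iUnion.2 ⟨(i, j), Set.mem_iUnion.2 ⟨hne, ?_⟩⟩
        rw [Set.mem_setOf_eq, inner_sub_right]
        simpa using sub_eq_zero.2 hij
      exact ed_oneD _ hsinj γ hsum hγ
    -- integrability of g on B
    have hgint : Integrable g μ := by
      rw [hμ, hg]
      refine ContinuousOn.integrableOn_compact (isCompact_closedBall 0 1)
        (Continuous.continuousOn ?_)
      refine continuous_finset_sum _ fun i _ => continuous_finset_sum _ fun j _ => ?_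
      exact continuous_const.mul
        (((continuous_id.inner continuous_const).sub
          (continuous_id.inner continuous_const)).abs.neg)
    -- integral of g equals c * S
    have hterm : ∀ i j : Fin n,
        IntegrableOn (fun u : E => γ i * γ j * (-|(inner ℝ u (x i) : ℝ) - (inner ℝ u (x j) : ℝ)|))
          B volume := by
      intro i j
      refine ContinuousOn.integrableOn_compact (isCompact_closedBall 0 1)
        (Continuous.continuousOn ?_)
      exact continuous_const.mul
        (((continuous_id.inner continuous_const).sub
          (continuous_id.inner continuous_const)).abs.neg)
    have hIg : ∫ u, g u ∂μ = c * (∑ i, ∑ j, γ i * γ j * (-(dist (x i) (x j)))) := by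
      rw [hμ, hg]
      rw [integral_finset_sum _ (fun i _ => integrable_finset_sum _ fun j _ => hterm i j)]
      rw [Finset.mul_sum]
      refine Finset.sum_congr rfl fun i _ => ?_
      rw [integral_finset_sum _ (fun j _ => hterm i j), Finset.mul_sum]
      refine Finset.sum_congr rfl fun j _ => ?_
      have hsub : ∀ u : E, (inner ℝ u (x i) : ℝ) - (inner ℝ u (x j) : ℝ)
          = (inner ℝ u (x i - x j) : ℝ) := fun u => (inner_sub_right _ _ _).symm
      calc ∫ u in B, γ i * γ j * (-|(inner ℝ u (x i) : ℝ) - (inner ℝ u (x j) : ℝ)|)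
          = ∫ u in B, (γ i * γ j) * (-|(inner ℝ u (x i - x j) : ℝ)|) := by
            refine setIntegral_congr_fun measurableSet_closedBall fun u _ => ?_
            rw [hsub]
        _ = (γ i * γ j) * -(∫ u in B, |(inner ℝ u (x i - x j) : ℝ)|) := by
            rw [integral_const_mul, ← integral_neg]
        _ = (γ i * γ j) * -(c * ‖x i - x j‖) := by rw [ed_ball_inner hd]
        _ = c * (γ i * γ j * (-(dist (x i) (x j)))) := by rw [dist_eq_norm]; ring
    -- positivity of the integral
    have haeN : ∀ᵐ u ∂μ, u ∉ N := by
      rw [ae_iff]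
      simpa using hNμ
    have haepos : ∀ᵐ u ∂μ, 0 < g u := haeN.mono fun u hu => hgpos u hu
    have hIpos : 0 < ∫ u, g u ∂μ := by
      refine (integral_pos_iff_support_of_nonneg_ae (haepos.mono fun u hu => hu.le) hgint).2 ?_
      by_contra hle
      push_neg at hle
      have h0 : μ (Function.support g) = 0 := le_antisymm hle (zero_le ..)
      have h1 : μ (Function.support g)ᶜ = 0 := by
        have hsub : (Function.support g)ᶜ ⊆ {u : E | ¬ 0 < g u} := by
          intro u hu
          simp only [Set.mem_compl_iff, Function.mem_support, not_not] at hu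
          simp [hu]
        refine measure_mono_null hsub ?_
        rw [← ae_iff] at *
        exact haepos
      have := measure_union_le (μ := μ) (Function.support g) (Function.support g)ᶜ
      rw [Set.union_compl_self, h0, h1, add_zero] at this
      exact absurd (le_antisymm this (zero_le ..)) hμuniv.ne'
    rw [hIg] at hIpos
    nlinarith [hIpos, hcpos]
end

section
/- Fix σ, r > 0 and n ≥ 1. Let M(n, r, σr) be the set of vector measures Γ = Σ_{i=1}^n γ_i δ_{x_i} with γ_i ∈ R, Σ_i γ_i = 0, all x_i in the closed ball B(0, σr), and pairwise distances |x_i - x_j| ≥ r for i ≠ j. Then there exists λ_σ > 0 (depending only on σ, n, d) such that for all Γ ∈ M(n, r, σr): |Γ|_TV ≤ λ_σ √(n/r) · ‖Γ‖_K, where ‖Γ‖_K^2 = Σ_{i,j} γ_i γ_j K(x_i, x_j) with K the Energy-Distance kernel. -/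
section StepB
open MeasureTheory Real Set

noncomputable def psi (c s : ℝ) : ℝ := (1 - Real.exp (-(s * c))) * s ^ (-(3:ℝ)/2)

lemma psi_meas (c : ℝ) : Measurable (psi c) := by
  apply Measurable.mul
  · exact (measurable_const.sub ((measurable_id.mul_const c).neg.exp))
  · exact measurable_id.pow_const _ |>.comp measurable_id |>.mono le_rfl le_rfl |>.mono le_rfl le_rfl

lemma psi_nonneg {c s : ℝ} (hc : 0 ≤ c) (hs : 0 < s) : 0 ≤ psi c s := by
  apply mul_nonneg
  · simp only [sub_nonneg]
    exact Real.exp_le_one_iff.mpr (by nlinarith)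
  · positivity

lemma psi_integrableOn (c : ℝ) (hc : 0 ≤ c) : IntegrableOn (psi c) (Ioi 0) := by
  have hmeas : Measurable (psi c) := psi_meas c
  rw [show Ioi (0:ℝ) = Ioc 0 1 ∪ Ioi 1 by rw [Ioc_union_Ioi_eq_Ioi]; norm_num]
  apply IntegrableOn.union
  · -- bound by c * s^(-1/2)
    have hint : IntegrableOn (fun s : ℝ => c * s ^ (-(1:ℝ)/2)) (Ioc 0 1) := by
      apply Integrable.const_mul
      have := (intervalIntegral.intervalIntegrable_rpow' (a := 0) (b := 1)
        (r := -(1:ℝ)/2) (by norm_num))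
      rwa [intervalIntegrable_iff, uIoc_of_le (by norm_num : (0:ℝ) ≤ 1)] at this
    apply Integrable.mono hint hmeas.aestronglyMeasurable
    filter_upwards [ae_restrict_mem measurableSet_Ioc] with s hs
    obtain ⟨hs0, hs1⟩ := hs
    have h1 : 1 - Real.exp (-(s * c)) ≤ s * c := by nlinarith [Real.add_one_le_exp (-(s*c))]
    have h0 : 0 ≤ 1 - Real.exp (-(s * c)) := by
      simp only [sub_nonneg]; exact Real.exp_le_one_iff.mpr (by nlinarith)
    rw [Real.norm_eq_abs, Real.norm_eq_abs, abs_of_nonneg (psi_nonneg hc hs0),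
      abs_of_nonneg (by positivity)]
    unfold psi
    calc (1 - Real.exp (-(s * c))) * s ^ (-(3:ℝ)/2) ≤ (s * c) * s ^ (-(3:ℝ)/2) := by
          apply mul_le_mul_of_nonneg_right h1 (by positivity)
      _ = c * (s ^ (1:ℝ) * s ^ (-(3:ℝ)/2)) := by rw [Real.rpow_one]; ring
      _ = c * s ^ (-(1:ℝ)/2) := by rw [← Real.rpow_add hs0]; norm_num
  · have hint : IntegrableOn (fun s : ℝ => s ^ (-(3:ℝ)/2)) (Ioi 1) := by
      rw [integrableOn_Ioi_rpow_iff zero_lt_one]; norm_num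
    apply Integrable.mono hint hmeas.aestronglyMeasurable
    filter_upwards [ae_restrict_mem measurableSet_Ioi] with s hs
    have hs0 : (0:ℝ) < s := lt_trans zero_lt_one hs
    have h0 : 0 ≤ 1 - Real.exp (-(s * c)) := by
      simp only [sub_nonneg]; exact Real.exp_le_one_iff.mpr (by nlinarith)
    have h1 : 1 - Real.exp (-(s * c)) ≤ 1 := by
      have := Real.exp_pos (-(s*c)); linarith
    rw [Real.norm_eq_abs, Real.norm_eq_abs, abs_of_nonneg (psi_nonneg hc hs0),
      abs_of_nonneg (by positivity)]
    unfold psi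
    nlinarith [Real.rpow_pos_of_pos hs0 (-(3:ℝ)/2)]

noncomputable def I1 : ℝ := ∫ s in Ioi (0:ℝ), psi 1 s

lemma I1_pos : 0 < I1 := by
  rw [I1, setIntegral_pos_iff_support_of_nonneg_ae]
  · have : Function.support (psi 1) ∩ Ioi 0 = Ioi 0 := by
      apply inter_eq_right.mpr
      intro s hs
      simp only [Function.mem_support, psi]
      have h1 : Real.exp (-(s * 1)) < 1 := by
        rw [Real.exp_lt_one_iff]; simp at hs ⊢; linarith
      have h2 : (0:ℝ) < s ^ (-(3:ℝ)/2) := Real.rpow_pos_of_pos hs _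
      nlinarith
    rw [this]
    simp [Real.volume_Ioi]
  · filter_upwards [ae_restrict_mem measurableSet_Ioi] with s hs
    exact psi_nonneg zero_le_one hs
  · exact psi_integrableOn 1 zero_le_one

lemma psi_integral (t : ℝ) (ht : 0 ≤ t) :
    ∫ s in Ioi (0:ℝ), psi (t^2) s = t * I1 := by
  rcases eq_or_lt_of_le ht with h | h
  · simp only [← h, zero_mul]
    have : ∀ s ∈ Ioi (0:ℝ), psi ((0:ℝ)^2) s = 0 := by
      intro s hs; simp [psi]
    rw [setIntegral_congr_fun measurableSet_Ioi this]; simp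
  · have ht2 : (0:ℝ) < t^2 := by positivity
    have key : ∀ s ∈ Ioi (0:ℝ), psi (t^2) s = t^3 * psi 1 (t^2 * s) := by
      intro s hs
      have hs0 : (0:ℝ) < s := hs
      simp only [psi, mul_one]
      rw [show -(t^2 * s) = -(s * t^2) by ring, Real.mul_rpow ht2.le hs0.le]
      have h3 : (t^2 : ℝ) ^ (-(3:ℝ)/2) = t ^ (-3 : ℝ) := by
        rw [← Real.rpow_natCast t 2, ← Real.rpow_mul ht]
        norm_num
      rw [h3, Real.rpow_neg ht]
      have h4 : t ^ (3:ℝ) = t ^ 3 := by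
        rw [← Real.rpow_natCast t 3]; norm_num
      field_simp [← h4]
      rw [h4]
      ring
    rw [setIntegral_congr_fun measurableSet_Ioi key, integral_const_mul,
      MeasureTheory.integral_comp_mul_left_Ioi (psi 1) 0 ht2, mul_zero]
    rw [smul_eq_mul, I1]
    have : t^3 * ((t^2)⁻¹ * ∫ s in Ioi (0:ℝ), psi 1 s) = (t^3 * (t^2)⁻¹) * ∫ s in Ioi (0:ℝ), psi 1 s := by ring
    rw [this]
    congr 1
    field_simp

end StepB

section StepA
open MeasureTheory Real Set Finset
open scoped RealInnerProductSpace

noncomputable def charFn {d : ℕ} (w : EuclideanSpace ℝ (Fin d)) :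
    Multiplicative (EuclideanSpace ℝ (Fin d)) →* ℂ where
  toFun v := Complex.exp (Complex.I * (⟪w, v.toAdd⟫ : ℝ))
  map_one' := by simp
  map_mul' a b := by
    simp only [toAdd_mul, inner_add_right, Complex.ofReal_add, mul_add,
      Complex.exp_add]

lemma charFn_inj {d : ℕ} : Function.Injective (charFn (d := d)) := by
  intro w w' h
  by_contra hne
  have hu0 : w - w' ≠ 0 := sub_ne_zero.mpr hne
  have hnu : (0:ℝ) < ‖w - w'‖^2 := by
    have := norm_pos_iff.mpr hu0
    positivity
  set v : EuclideanSpace ℝ (Fin d) := (π / ‖w - w'‖^2) • (w - w') with hv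
  have hv2 : ⟪w, v⟫ - ⟪w', v⟫ = π := by
    rw [← inner_sub_left, hv, real_inner_smul_right, real_inner_self_eq_norm_sq]
    field_simp
  have h2 := DFunLike.congr_fun h (Multiplicative.ofAdd v)
  simp only [charFn, MonoidHom.coe_mk, OneHom.coe_mk, toAdd_ofAdd] at h2
  have h3 : Complex.exp (Complex.I * (⟪w, v⟫:ℝ) - Complex.I * (⟪w', v⟫:ℝ)) = 1 := by
    rw [Complex.exp_sub, h2, div_self (Complex.exp_ne_zero _)]
  rw [← mul_sub, show ((⟪w, v⟫:ℝ):ℂ) - ((⟪w', v⟫:ℝ):ℂ) = ((π:ℝ):ℂ) by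
    rw [← Complex.ofReal_sub, hv2], mul_comm, Complex.exp_pi_mul_I] at h3
  norm_num at h3

lemma gaussian_pd {d n : ℕ} (x : Fin n → EuclideanSpace ℝ (Fin d))
    (hx : ∀ i j, i ≠ j → x i ≠ x j) (γ : Fin n → ℝ) (hγ : γ ≠ 0) :
    0 < ∑ i, ∑ j, γ i * γ j * Real.exp (-‖x i - x j‖^2 / 4) := by
  classical
  set F : EuclideanSpace ℝ (Fin d) → ℂ := fun v => ∑ k, (γ k : ℂ) * Complex.exp (Complex.I * (⟪x k, v⟫ : ℝ)) with hF
  set G : EuclideanSpace ℝ (Fin d) → ℝ := fun v => ‖F v‖^2 * Real.exp (-‖v‖^2) with hG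
  set T : EuclideanSpace ℝ (Fin d) → ℂ := fun v => ∑ i, ∑ j, ((γ i : ℂ) * (γ j : ℂ) *
      Complex.exp (-1 * ‖v‖^2 + Complex.I * (⟪x i - x j, v⟫ : ℝ))) with hT
  -- pointwise identity
  have h1 : ∀ v : EuclideanSpace ℝ (Fin d), T v = ((G v : ℝ) : ℂ) := by
    intro v
    have step : ∀ i j : Fin n, (γ i : ℂ) * (γ j : ℂ) *
        Complex.exp (-1 * ‖v‖^2 + Complex.I * (⟪x i - x j, v⟫ : ℝ))
        = Complex.exp (-1 * (‖v‖:ℂ)^2) *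
          (((γ i : ℂ) * Complex.exp (Complex.I * (⟪x i, v⟫ : ℝ))) *
           (starRingEnd ℂ) ((γ j : ℂ) * Complex.exp (Complex.I * (⟪x j, v⟫ : ℝ)))) := by
      intro i j
      rw [inner_sub_left, map_mul, ← Complex.exp_conj]
      have : (starRingEnd ℂ) (Complex.I * (⟪x j, v⟫ : ℝ)) = -(Complex.I * (⟪x j, v⟫ : ℝ)) := by
        simp [Complex.conj_ofReal]
      rw [this, Complex.conj_ofReal]
      rw [Complex.ofReal_sub, mul_sub, sub_eq_add_neg, add_comm ((Complex.I * _)) _,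
        ← add_assoc, Complex.exp_add, Complex.exp_add]
      push_cast
      ring
    calc T v = ∑ i, ∑ j, Complex.exp (-1 * (‖v‖:ℂ)^2) *
          (((γ i : ℂ) * Complex.exp (Complex.I * (⟪x i, v⟫ : ℝ))) *
           (starRingEnd ℂ) ((γ j : ℂ) * Complex.exp (Complex.I * (⟪x j, v⟫ : ℝ)))) := by
          rw [hT]
          exact Finset.sum_congr rfl fun i _ => Finset.sum_congr rfl fun j _ => step i j
      _ = Complex.exp (-1 * (‖v‖:ℂ)^2) * (F v * (starRingEnd ℂ) (F v)) := by
          simp_rw [← Finset.mul_sum, ← Finset.sum_mul, ← map_sum]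
          rfl
      _ = ((G v : ℝ) : ℂ) := by
          rw [Complex.mul_conj, hG, Complex.normSq_eq_norm_sq]
          push_cast
          ring
  -- integrability of each term
  have h2 : ∀ i j : Fin n, Integrable (fun v : EuclideanSpace ℝ (Fin d) => ((γ i : ℂ) * (γ j : ℂ) *
      Complex.exp (-1 * ‖v‖^2 + Complex.I * (⟪x i - x j, v⟫ : ℝ)))) := by
    intro i j
    exact (GaussianFourier.integrable_cexp_neg_mul_sq_norm_add (by norm_num : (0:ℝ) < (1:ℂ).re)
      Complex.I (x i - x j)).const_mul _
  have hTint : Integrable T := by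
    rw [hT]
    apply integrable_finset_sum
    intro i _
    exact integrable_finset_sum _ (fun j _ => h2 i j)
  -- value of the integral
  have h3 : ∫ v, T v = ∑ i, ∑ j, ((γ i : ℂ) * (γ j : ℂ) *
      ((π:ℂ) ^ ((d:ℂ)/2) * Complex.exp (-(‖x i - x j‖:ℂ)^2/4))) := by
    rw [hT, integral_finset_sum _ (fun i _ => integrable_finset_sum _ (fun j _ => h2 i j))]
    refine Finset.sum_congr rfl fun i _ => ?_
    rw [integral_finset_sum _ (fun j _ => h2 i j)]
    refine Finset.sum_congr rfl fun j _ => ?_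
    rw [MeasureTheory.integral_const_mul]
    congr 1
    rw [GaussianFourier.integral_cexp_neg_mul_sq_norm_add (by norm_num : (0:ℝ) < (1:ℂ).re)
      Complex.I (x i - x j)]
    congr 1
    · norm_num
    · congr 1
      rw [Complex.I_sq]
      push_cast
      ring
  set S : ℝ := ∑ i, ∑ j, γ i * γ j * Real.exp (-‖x i - x j‖^2 / 4) with hS
  have hGint : Integrable G := by
    have h := hTint.re
    apply h.congr
    filter_upwards with v
    rw [show RCLike.re (T v) = (T v).re from rfl, h1 v, Complex.ofReal_re]
  have hPS : (∑ i, ∑ j, ((γ i : ℂ) * (γ j : ℂ) *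
      ((π:ℂ) ^ ((d:ℂ)/2) * Complex.exp (-(‖x i - x j‖:ℂ)^2/4))))
      = (↑(π ^ ((d:ℝ)/2)) : ℂ) * (S:ℂ) := by
    rw [hS, Complex.ofReal_cpow pi_pos.le]
    push_cast
    rw [Finset.mul_sum]
    refine Finset.sum_congr rfl fun i _ => ?_
    rw [Finset.mul_sum]
    refine Finset.sum_congr rfl fun j _ => ?_
    ring
  have hint_eq : (↑(π ^ ((d:ℝ)/2)) : ℂ) * (S : ℂ) = ↑(∫ v, G v) := by
    rw [← hPS, ← h3]
    rw [show (fun v => T v) = fun v => ((G v : ℝ) : ℂ) from funext h1]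
    exact integral_ofReal
  have hreal : π ^ ((d:ℝ)/2) * S = ∫ v, G v := by exact_mod_cast hint_eq
  clear hint_eq hPS h3 h1 hTint h2
  have hGnonneg : ∀ v, 0 ≤ G v := fun v => by rw [hG]; positivity
  obtain ⟨P, hpi, hreal⟩ : ∃ P : ℝ, 0 < P ∧ P * S = ∫ v, G v :=
    ⟨_, Real.rpow_pos_of_pos pi_pos _, hreal⟩
  have hIG : (0:ℝ) ≤ ∫ v, G v := integral_nonneg hGnonneg
  rcases hIG.lt_or_eq with hpos | hzero
  · by_contra hcon
    push_neg at hcon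
    have h8 : P * S ≤ 0 := mul_nonpos_of_nonneg_of_nonpos hpi.le hcon
    rw [hreal] at h8
    exact absurd hpos (not_lt.mpr h8)
  · exfalso
    have hzero : (0:ℝ) = ∫ v, G v := hzero
    have hG0 : G =ᵐ[volume] 0 :=
      (integral_eq_zero_iff_of_nonneg hGnonneg hGint).mp hzero.symm
    have hFcont : Continuous F := by
      apply continuous_finset_sum
      intro k _
      exact continuous_const.mul (Complex.continuous_exp.comp (continuous_const.mul
        (Complex.continuous_ofReal.comp (Continuous.inner continuous_const continuous_id))))
    have hGcont : Continuous G := by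
      exact ((hFcont.norm.pow 2).mul (Real.continuous_exp.comp (continuous_norm.pow 2).neg))
    have hGzero : G = 0 := (Continuous.ae_eq_iff_eq volume hGcont continuous_const).mp hG0
    have hFv : ∀ v : EuclideanSpace ℝ (Fin d), F v = 0 := by
      intro v
      have h5 : G v = 0 := congrFun hGzero v
      rw [hG] at h5
      have he : (0:ℝ) < Real.exp (-‖v‖^2) := Real.exp_pos _
      have h6 : ‖F v‖^2 = 0 := by
        rcases mul_eq_zero.mp h5 with h | h
        · exact h
        · exact absurd h he.ne'
      simpa using pow_eq_zero_iff (n := 2) (by norm_num) |>.mp h6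
    have hxinj : Function.Injective x := by
      intro a b hab
      by_contra hne
      exact hx a b hne hab
    have hLI : LinearIndependent ℂ (fun k : Fin n => ⇑(charFn (x k))) :=
      (linearIndependent_monoidHom (Multiplicative (EuclideanSpace ℝ (Fin d))) ℂ).comp
        (fun k => charFn (x k)) (charFn_inj.comp hxinj)
    have hsum0 : ∑ k, (γ k : ℂ) • (fun k : Fin n => ⇑(charFn (x k))) k = 0 := by
      funext v
      have h7 := hFv (Multiplicative.toAdd v)
      rw [hF] at h7
      simpa [charFn, Finset.sum_apply] using h7
    have hall := Fintype.linearIndependent_iff.mp hLI (fun k => (γ k : ℂ)) hsum0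
    apply hγ
    funext k
    have h9 := hall k
    exact_mod_cast h9

end StepA

section StepC
open MeasureTheory Real Set Finset
open scoped RealInnerProductSpace
lemma gaussian_pd' {d n : ℕ} (b : ℝ) (hb : 0 < b) (x : Fin n → EuclideanSpace ℝ (Fin d))
    (hx : ∀ i j, i ≠ j → x i ≠ x j) (γ : Fin n → ℝ) (hγ : γ ≠ 0) :
    0 < ∑ i, ∑ j, γ i * γ j * Real.exp (-(b * dist (x i) (x j) ^ 2)) := by
  have h2 : (0:ℝ) < 2 * Real.sqrt b := by positivity
  set y : Fin n → EuclideanSpace ℝ (Fin d) := fun k => (2 * Real.sqrt b) • x k with hy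
  have hy' : ∀ i j, i ≠ j → y i ≠ y j := by
    intro i j hij hc
    exact hx i j hij (smul_right_injective _ h2.ne' hc)
  have hmain := gaussian_pd y hy' γ hγ
  have hnorm : ∀ i j : Fin n, -‖y i - y j‖^2/4 = -(b * dist (x i) (x j) ^ 2) := by
    intro i j
    rw [hy]
    simp only
    rw [← smul_sub, norm_smul, Real.norm_eq_abs, abs_of_pos h2, dist_eq_norm, mul_pow]
    have hsq : Real.sqrt b ^ 2 = b := Real.sq_sqrt hb.le
    nlinarith [sq_nonneg ‖x i - x j‖]
  calc (0:ℝ) < ∑ i, ∑ j, γ i * γ j * Real.exp (-‖y i - y j‖^2 / 4) := hmain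
    _ = ∑ i, ∑ j, γ i * γ j * Real.exp (-(b * dist (x i) (x j) ^ 2)) := by
        refine Finset.sum_congr rfl fun i _ => Finset.sum_congr rfl fun j _ => ?_
        rw [show -‖y i - y j‖^2 / 4 = -‖y i - y j‖^2/4 from rfl, hnorm i j]

lemma Q_pos {d n : ℕ} (x : Fin n → EuclideanSpace ℝ (Fin d))
    (hx : ∀ i j, i ≠ j → x i ≠ x j) (γ : Fin n → ℝ) (hγ : γ ≠ 0) (hsum : ∑ i, γ i = 0) :
    0 < ∑ i, ∑ j, γ i * γ j * (-(dist (x i) (x j))) := by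
  classical
  set g : ℝ → ℝ := fun s => ∑ i, ∑ j, (-(γ i * γ j)) * psi ((dist (x i) (x j))^2) s with hg
  have hterm : ∀ (i j : Fin n), IntegrableOn
      (fun s => (-(γ i * γ j)) * psi ((dist (x i) (x j))^2) s) (Ioi 0) :=
    fun i j => (psi_integrableOn _ (sq_nonneg _)).const_mul _
  have hgint : IntegrableOn g (Ioi 0) := by
    apply integrable_finset_sum
    intro i _
    exact integrable_finset_sum _ (fun j _ => hterm i j)
  have hval : ∫ s in Ioi (0:ℝ), g s
      = ∑ i, ∑ j, (-(γ i * γ j)) * (dist (x i) (x j) * I1) := by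
    rw [hg, integral_finset_sum _
      (fun i _ => integrable_finset_sum _ (fun j _ => hterm i j))]
    refine Finset.sum_congr rfl fun i _ => ?_
    rw [integral_finset_sum _ (fun j _ => hterm i j)]
    refine Finset.sum_congr rfl fun j _ => ?_
    rw [MeasureTheory.integral_const_mul, ← psi_integral _ dist_nonneg]
  have key : ∀ s : ℝ, g s
      = (∑ i, ∑ j, γ i * γ j * Real.exp (-(s * dist (x i) (x j)^2))) * s ^ (-(3:ℝ)/2) := by
    intro s
    rw [hg]
    simp only
    have expand : ∀ i j : Fin n, (-(γ i * γ j)) * psi (dist (x i) (x j)^2) s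
        = γ i * γ j * Real.exp (-(s * dist (x i) (x j)^2)) * s ^ (-(3:ℝ)/2)
          - γ i * γ j * s ^ (-(3:ℝ)/2) := by
      intro i j; simp only [psi]; ring
    simp_rw [expand, Finset.sum_sub_distrib]
    have hzero : ∑ i, ∑ j, γ i * γ j * s ^ (-(3:ℝ)/2) = 0 := by
      have h1 : ∑ j, γ j * s ^ (-(3:ℝ)/2) = 0 := by rw [← Finset.sum_mul, hsum, zero_mul]
      simp_rw [mul_assoc, ← Finset.mul_sum, h1, mul_zero]
      simp
    rw [hzero, sub_zero, Finset.sum_mul]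
    refine Finset.sum_congr rfl fun i _ => ?_
    rw [Finset.sum_mul]
  have hgpos : ∀ s ∈ Ioi (0:ℝ), 0 < g s := by
    intro s hs
    have hs0 : (0:ℝ) < s := hs
    rw [key s]
    have h1 := gaussian_pd' s hs0 x hx γ hγ
    have h2 : (0:ℝ) < s ^ (-(3:ℝ)/2) := Real.rpow_pos_of_pos hs0 _
    positivity
  have hIgpos : 0 < ∫ s in Ioi (0:ℝ), g s := by
    rw [setIntegral_pos_iff_support_of_nonneg_ae]
    · have hsupp : Function.support g ∩ Set.Ioi 0 = Set.Ioi (0:ℝ) := by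
        apply Set.inter_eq_right.mpr
        intro s hs
        exact (hgpos s hs).ne'
      rw [hsupp]
      simp [Real.volume_Ioi]
    · filter_upwards [ae_restrict_mem measurableSet_Ioi] with s hs
      exact (hgpos s hs).le
    · exact hgint
  have hQI : (∑ i, ∑ j, γ i * γ j * (-(dist (x i) (x j)))) * I1
      = ∫ s in Ioi (0:ℝ), g s := by
    rw [hval, Finset.sum_mul]
    refine Finset.sum_congr rfl fun i _ => ?_
    rw [Finset.sum_mul]
    refine Finset.sum_congr rfl fun j _ => ?_
    ring
  by_contra hcon
  push_neg at hcon
  have h8 : (∑ i, ∑ j, γ i * γ j * (-(dist (x i) (x j)))) * I1 ≤ 0 :=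
    mul_nonpos_of_nonpos_of_nonneg hcon I1_pos.le
  rw [hQI] at h8
  exact absurd hIgpos (not_lt.mpr h8)

end StepC

section StepD
open MeasureTheory Real Set Finset

/-- TV bound without collapse: there is `λ_σ > 0` (depending only on `σ`, `n`,
`d`) such that any zero-sum atomic vector of coefficients on `n` points of the
ball `B(0,σr)` with pairwise separation at least `r` satisfies
`|Γ|_TV ≤ λ_σ √(n/r) ‖Γ‖_K`, where `‖Γ‖_K² = Σ_{i,j} γ_i γ_j K(x_i,x_j)` for
the Energy-Distance kernel `K(x,y) = -|x-y|`. -/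
theorem tv_bound_no_collapse (d n : ℕ) (hn : 1 ≤ n) (σ : ℝ) (hσ : 0 < σ) :
    ∃ lam : ℝ, 0 < lam ∧
      ∀ (r : ℝ), 0 < r →
      ∀ (x : Fin n → EuclideanSpace ℝ (Fin d)) (γ : Fin n → ℝ),
        (∀ i, ‖x i‖ ≤ σ * r) →
        (∀ i j, i ≠ j → r ≤ dist (x i) (x j)) →
        (∑ i, γ i = 0) →
        ∑ i, |γ i| ≤ lam * Real.sqrt (n / r) *
          Real.sqrt (∑ i, ∑ j, γ i * γ j * (-(dist (x i) (x j)))) := by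
  classical
  set S : Set ((Fin n → EuclideanSpace ℝ (Fin d)) × (Fin n → ℝ)) :=
    {p | (∀ i, ‖p.1 i‖ ≤ σ) ∧ (∀ i j, i ≠ j → 1 ≤ dist (p.1 i) (p.1 j)) ∧
      (∑ i, p.2 i = 0) ∧ (∑ i, (p.2 i)^2 = 1)} with hSdef
  set Q : ((Fin n → EuclideanSpace ℝ (Fin d)) × (Fin n → ℝ)) → ℝ :=
    fun p => ∑ i, ∑ j, p.2 i * p.2 j * (-(dist (p.1 i) (p.1 j))) with hQdef
  have hc1 : ∀ i : Fin n, Continuous fun p : (Fin n → EuclideanSpace ℝ (Fin d)) × (Fin n → ℝ) =>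
      ‖p.1 i‖ := fun i => ((continuous_apply i).comp continuous_fst).norm
  have hc2 : ∀ i j : Fin n, Continuous fun p : (Fin n → EuclideanSpace ℝ (Fin d)) × (Fin n → ℝ) =>
      dist (p.1 i) (p.1 j) := fun i j => Continuous.dist
      ((continuous_apply i).comp continuous_fst) ((continuous_apply j).comp continuous_fst)
  have hc5 : ∀ i : Fin n, Continuous fun p : (Fin n → EuclideanSpace ℝ (Fin d)) × (Fin n → ℝ) =>
      p.2 i := fun i => (continuous_apply i).comp continuous_snd
  have hQcont : Continuous Q := by
    apply continuous_finset_sum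
    intro i _
    apply continuous_finset_sum
    intro j _
    exact ((hc5 i).mul (hc5 j)).mul (hc2 i j).neg
  have hQpos : ∀ p ∈ S, 0 < Q p := by
    rintro ⟨x, γ⟩ ⟨h1, h2, h3, h4⟩
    simp only at h1 h2 h3 h4 ⊢
    have hγ : γ ≠ 0 := by
      intro h0
      rw [h0] at h4
      simp at h4
    have hx : ∀ i j, i ≠ j → x i ≠ x j := by
      intro i j hij
      have := h2 i j hij
      intro hc
      rw [hc] at this
      simp at this
      linarith
    exact Q_pos x hx γ hγ h3
  have hSclosed : IsClosed S := by
    have hrw : S = (⋂ i, {p : (Fin n → EuclideanSpace ℝ (Fin d)) × (Fin n → ℝ) | ‖p.1 i‖ ≤ σ}) ∩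
        ((⋂ i, ⋂ j, {p : (Fin n → EuclideanSpace ℝ (Fin d)) × (Fin n → ℝ) |
            i ≠ j → 1 ≤ dist (p.1 i) (p.1 j)}) ∩
         ({p : (Fin n → EuclideanSpace ℝ (Fin d)) × (Fin n → ℝ) | ∑ i, p.2 i = 0} ∩
          {p : (Fin n → EuclideanSpace ℝ (Fin d)) × (Fin n → ℝ) | ∑ i, (p.2 i)^2 = 1})) := by
      ext p
      simp only [hSdef, Set.mem_setOf_eq, Set.mem_inter_iff, Set.mem_iInter]
    rw [hrw]
    refine IsClosed.inter (isClosed_iInter fun i => isClosed_le (hc1 i) continuous_const)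
      (IsClosed.inter (isClosed_iInter fun i => isClosed_iInter fun j => ?_)
        (IsClosed.inter
          (isClosed_eq (continuous_finset_sum _ fun i _ => hc5 i) continuous_const)
          (isClosed_eq (continuous_finset_sum _ fun i _ => (hc5 i).pow 2) continuous_const)))
    by_cases hij : i = j
    · simp [hij]
    · have : {p : (Fin n → EuclideanSpace ℝ (Fin d)) × (Fin n → ℝ) |
          i ≠ j → 1 ≤ dist (p.1 i) (p.1 j)} =
          {p : (Fin n → EuclideanSpace ℝ (Fin d)) × (Fin n → ℝ) | 1 ≤ dist (p.1 i) (p.1 j)} := by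
        ext p; simp [hij]
      rw [this]
      exact isClosed_le continuous_const (hc2 i j)
  have hSbdd : Bornology.IsBounded S := by
    apply Bornology.IsBounded.subset (Metric.isBounded_closedBall (x := 0) (r := max σ 1))
    rintro ⟨x, γ⟩ ⟨h1, _, _, h4⟩
    simp only at h1 h4
    rw [Metric.mem_closedBall, dist_zero_right]
    rw [Prod.norm_def]
    apply max_le
    · apply le_trans _ (le_max_left σ 1)
      exact (pi_norm_le_iff_of_nonneg hσ.le).mpr h1
    · apply le_trans _ (le_max_right σ 1)
      apply (pi_norm_le_iff_of_nonneg zero_le_one).mpr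
      intro i
      have hsq : γ i ^ 2 ≤ 1 := by
        rw [← h4]
        exact Finset.single_le_sum (f := fun i => γ i ^ 2) (fun i _ => sq_nonneg _)
          (Finset.mem_univ i)
      rw [Real.norm_eq_abs, ← Real.sqrt_sq_eq_abs, ← Real.sqrt_one]
      exact Real.sqrt_le_sqrt hsq
  have hScompact : IsCompact S := Metric.isCompact_of_isClosed_isBounded hSclosed hSbdd
  have hmem : ∀ (r : ℝ), 0 < r → ∀ (x : Fin n → EuclideanSpace ℝ (Fin d)) (γ : Fin n → ℝ),
      (∀ i, ‖x i‖ ≤ σ * r) → (∀ i j, i ≠ j → r ≤ dist (x i) (x j)) → (∑ i, γ i = 0) →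
      γ ≠ 0 →
      ((fun i => r⁻¹ • x i, fun i => γ i / Real.sqrt (∑ k, γ k ^ 2)) :
        (Fin n → EuclideanSpace ℝ (Fin d)) × (Fin n → ℝ)) ∈ S := by
    intro r hr x γ hball hsep hzero hγ
    have hNpos : 0 < ∑ k, γ k ^ 2 := by
      rcases Function.ne_iff.mp hγ with ⟨k, hk⟩
      exact Finset.sum_pos' (fun i _ => sq_nonneg _)
        ⟨k, Finset.mem_univ k, by simp at hk; positivity⟩
    have hN0 : 0 < Real.sqrt (∑ k, γ k ^ 2) := Real.sqrt_pos.mpr hNpos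
    refine ⟨?_, ?_, ?_, ?_⟩
    · intro i
      simp only
      rw [norm_smul, norm_inv, Real.norm_eq_abs, abs_of_pos hr]
      calc r⁻¹ * ‖x i‖ ≤ r⁻¹ * (σ * r) := by
            apply mul_le_mul_of_nonneg_left (hball i) (by positivity)
        _ = σ := by field_simp
    · intro i j hij
      simp only
      rw [dist_smul₀, norm_inv, Real.norm_eq_abs, abs_of_pos hr]
      calc (1:ℝ) = r⁻¹ * r := by field_simp
        _ ≤ r⁻¹ * dist (x i) (x j) := by
            apply mul_le_mul_of_nonneg_left (hsep i j hij) (by positivity)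
    · simp only
      rw [← Finset.sum_div, hzero, zero_div]
    · simp only
      simp_rw [div_pow]
      rw [← Finset.sum_div, Real.sq_sqrt hNpos.le, div_self hNpos.ne']
  rcases Set.eq_empty_or_nonempty S with hSe | hSne
  · refine ⟨1, one_pos, ?_⟩
    intro r hr x γ hball hsep hzero
    by_cases hγ : γ = 0
    · rw [hγ]
      simp
    · exfalso
      have hmm := hmem r hr x γ hball hsep hzero hγ
      rw [hSe] at hmm
      exact hmm
  · obtain ⟨p₀, hp₀S, hp₀min⟩ := hScompact.exists_isMinOn hSne hQcont.continuousOn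
    have hc : 0 < Q p₀ := hQpos p₀ hp₀S
    refine ⟨1 / Real.sqrt (Q p₀), by positivity, ?_⟩
    intro r hr x γ hball hsep hzero
    by_cases hγ : γ = 0
    · rw [hγ]
      simp
    · have hNpos : 0 < ∑ k, γ k ^ 2 := by
        rcases Function.ne_iff.mp hγ with ⟨k, hk⟩
        exact Finset.sum_pos' (fun i _ => sq_nonneg _)
          ⟨k, Finset.mem_univ k, by simp at hk; positivity⟩
      set N := Real.sqrt (∑ k, γ k ^ 2) with hN
      have hN0 : 0 < N := Real.sqrt_pos.mpr hNpos
      have hpmem := hmem r hr x γ hball hsep hzero hγ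
      have hmin : Q p₀ ≤ Q (fun i => r⁻¹ • x i, fun i => γ i / N) := hp₀min hpmem
      set QO := ∑ i, ∑ j, γ i * γ j * (-(dist (x i) (x j))) with hQO
      have hscale : Q (fun i => r⁻¹ • x i, fun i => γ i / N) = QO * (r⁻¹ / N^2) := by
        rw [hQdef, hQO]
        simp only
        rw [Finset.sum_mul]
        refine Finset.sum_congr rfl fun i _ => ?_
        rw [Finset.sum_mul]
        refine Finset.sum_congr rfl fun j _ => ?_
        rw [dist_smul₀, norm_inv, Real.norm_eq_abs, abs_of_pos hr]
        field_simp
      have hQOlb : Q p₀ * (r * N^2) ≤ QO := by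
        have h9 : Q p₀ ≤ QO * (r⁻¹ / N^2) := by rw [← hscale]; exact hmin
        calc Q p₀ * (r * N^2) ≤ (QO * (r⁻¹ / N^2)) * (r * N^2) := by
              apply mul_le_mul_of_nonneg_right h9 (by positivity)
          _ = QO := by field_simp
      have hCS : ∑ i, |γ i| ≤ Real.sqrt n * N := by
        have h10 : (∑ i, |γ i|)^2 ≤ (n : ℝ) * ∑ i, γ i ^ 2 := by
          have h11 := sq_sum_le_card_mul_sum_sq (s := (Finset.univ : Finset (Fin n)))
            (f := fun i => |γ i|)
          simpa [sq_abs] using h11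
        have h12 : ∑ i, |γ i| ≤ Real.sqrt ((n:ℝ) * ∑ i, γ i ^ 2) :=
          Real.le_sqrt_of_sq_le h10
        rw [hN, ← Real.sqrt_mul (by positivity)]
        exact h12
      have hlb : Real.sqrt (Q p₀) * Real.sqrt r * N ≤ Real.sqrt QO := by
        have h13 : Real.sqrt (Q p₀ * (r * N^2)) ≤ Real.sqrt QO := Real.sqrt_le_sqrt hQOlb
        calc Real.sqrt (Q p₀) * Real.sqrt r * N = Real.sqrt (Q p₀ * (r * N^2)) := by
              rw [Real.sqrt_mul hc.le, Real.sqrt_mul hr.le, Real.sqrt_sq hN0.le]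
              ring
          _ ≤ Real.sqrt QO := h13
      have e1 : Real.sqrt ((n:ℝ)/r) * Real.sqrt r = Real.sqrt n := by
        rw [← Real.sqrt_mul (by positivity), div_mul_cancel₀ _ hr.ne']
      have hsc : Real.sqrt (Q p₀) ≠ 0 := by positivity
      calc ∑ i, |γ i| ≤ Real.sqrt n * N := hCS
        _ = (1 / Real.sqrt (Q p₀)) * Real.sqrt ((n:ℝ) / r) *
            (Real.sqrt (Q p₀) * Real.sqrt r * N) := by
            rw [← e1]
            field_simp
        _ ≤ (1 / Real.sqrt (Q p₀)) * Real.sqrt ((n:ℝ) / r) * Real.sqrt QO := by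
            apply mul_le_mul_of_nonneg_left hlb (by positivity)

end StepD
end

section
/- If μ = Σ_{i=1}^k v_i δ_{x_i} with distinct points x_i, Σ_i v_i = 0, Σ_i |v_i| = 1, v_i ≠ 0, and (v_1, …, v_{k-1}) NOT linearly independent, then μ is not an extremal point of the set {Γ : Γ(Ω)=0, |Γ|_TV ≤ 1}: there exist distinct measures ν_1, ν_2 in the set and t ∈ (0,1) with μ = t ν_1 + (1-t) ν_2. -/
open MeasureTheory
open scoped Classical

/-- Total variation norm of an `ℝ^d`-valued measure, given through its `d`
components as signed measures. -/
noncomputable def vecTV {d : ℕ} {α : Type*} [MeasurableSpace α]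
    (Γ : Fin d → SignedMeasure α) : ℝ :=
  sSup {c : ℝ | ∃ P : Finset (Set α), (∀ E ∈ P, MeasurableSet E) ∧
    ((P : Set (Set α)).Pairwise Disjoint) ∧
    c = ∑ E ∈ P, Real.sqrt (∑ i, (Γ i E) ^ 2)}

/-- The unit ball of zero-total-mass `ℝ^d`-valued measures supported in `Ω`. -/
def zeroMassTVBall (d : ℕ) (Ω : Set (EuclideanSpace ℝ (Fin d))) :
    Set (Fin d → SignedMeasure (EuclideanSpace ℝ (Fin d))) :=
  {Γ | (∀ i, Γ i Set.univ = 0) ∧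
    (∀ i, ∀ E : Set (EuclideanSpace ℝ (Fin d)), MeasurableSet E → E ⊆ Ωᶜ → Γ i E = 0) ∧
    vecTV Γ ≤ 1}

lemma eval_sum_dirac {α : Type*} [MeasurableSpace α] {k : ℕ} (x : Fin k → α)
    (u : Fin k → ℝ) (E : Set α) (hE : MeasurableSet E) :
    (∑ i, (u i) • (Measure.dirac (x i)).toSignedMeasure) E
      = ∑ i, if x i ∈ E then u i else 0 := by
  have h1 : (⇑(∑ i, (u i) • (Measure.dirac (x i)).toSignedMeasure) : Set α → ℝ)
      = ∑ i, ⇑((u i) • (Measure.dirac (x i)).toSignedMeasure) :=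
    map_sum (FunLike.coeAddMonoidHom (SignedMeasure α) (Set α) ℝ) _ _
  rw [h1, Finset.sum_apply]
  refine Finset.sum_congr rfl fun i _ => ?_
  rw [VectorMeasure.smul_apply, Measure.toSignedMeasure_apply_measurable hE,
    measureReal_def, Measure.dirac_apply' _ hE]
  by_cases h : x i ∈ E <;> simp [h]

lemma tv_bound {d k : ℕ} (x : Fin k → EuclideanSpace ℝ (Fin d))
    (u : Fin k → EuclideanSpace ℝ (Fin d)) :
    vecTV (fun j => ∑ i, (u i j) • (Measure.dirac (x i)).toSignedMeasure)
      ≤ ∑ i, ‖u i‖ := by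
  apply Real.sSup_le
  · rintro c ⟨P, hPm, hPd, rfl⟩
    calc ∑ E ∈ P, Real.sqrt (∑ j, ((∑ i, (u i j) • (Measure.dirac (x i)).toSignedMeasure) E) ^ 2)
        ≤ ∑ E ∈ P, ∑ i, (if x i ∈ E then ‖u i‖ else 0) := by
          refine Finset.sum_le_sum fun E hE => ?_
          have hme := hPm E hE
          have h2 : ∀ j : Fin d, ((∑ i, (u i j) • (Measure.dirac (x i)).toSignedMeasure) E)
              = (∑ i ∈ Finset.univ.filter (fun i => x i ∈ E), u i) j := by
            intro j
            rw [eval_sum_dirac _ _ _ hme,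
              WithLp.ofLp_sum, Finset.sum_apply, Finset.sum_filter]
          have h3 : Real.sqrt (∑ j, ((∑ i, (u i j) • (Measure.dirac (x i)).toSignedMeasure) E) ^ 2)
              = ‖∑ i ∈ Finset.univ.filter (fun i => x i ∈ E), u i‖ := by
            rw [EuclideanSpace.norm_eq]
            congr 1
            refine Finset.sum_congr rfl fun j _ => ?_
            rw [h2 j, Real.norm_eq_abs, sq_abs]
          rw [h3, ← Finset.sum_filter]
          exact norm_sum_le _ _
      _ = ∑ i, ∑ E ∈ P, (if x i ∈ E then ‖u i‖ else 0) := Finset.sum_comm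
      _ ≤ ∑ i, ‖u i‖ := by
          refine Finset.sum_le_sum fun i _ => ?_
          rw [← Finset.sum_filter]
          rcases Finset.eq_empty_or_nonempty (P.filter (fun E => x i ∈ E)) with h | ⟨E₀, hE₀⟩
          · rw [h, Finset.sum_empty]; positivity
          · have hcard : (P.filter (fun E => x i ∈ E)) = {E₀} := by
              apply Finset.eq_singleton_iff_unique_mem.mpr
              refine ⟨hE₀, fun E hE => ?_⟩
              simp only [Finset.mem_filter] at hE hE₀
              by_contra hne
              exact Set.disjoint_left.mp (hPd hE.1 hE₀.1 hne) hE.2 hE₀.2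
            rw [hcard, Finset.sum_singleton]
  · exact Finset.sum_nonneg fun i _ => norm_nonneg _

lemma mem_ball_of (d : ℕ) (Ω : Set (EuclideanSpace ℝ (Fin d))) {k : ℕ}
    (x u : Fin k → EuclideanSpace ℝ (Fin d)) (hxΩ : ∀ i, x i ∈ Ω)
    (hsum : ∑ i, u i = 0) (htv : ∑ i, ‖u i‖ ≤ 1) :
    (fun j => ∑ i, (u i j) • (Measure.dirac (x i)).toSignedMeasure) ∈ zeroMassTVBall d Ω := by
  refine ⟨fun j => ?_, fun j E hE hEΩ => ?_, le_trans (tv_bound x u) htv⟩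
  · rw [eval_sum_dirac _ _ _ MeasurableSet.univ]
    simp only [Set.mem_univ, if_true]
    rw [← Finset.sum_apply j Finset.univ (fun i => (u i).ofLp), ← WithLp.ofLp_sum, hsum]
    rfl
  · rw [eval_sum_dirac _ _ _ hE]
    refine Finset.sum_eq_zero fun i _ => ?_
    have : x i ∉ E := fun h => hEΩ h (hxΩ i)
    simp [this]

set_option maxHeartbeats 1000000 in
/-- If `μ = Σ_{i=1}^k v_i δ_{x_i}` with distinct `x_i ∈ Ω`, nonzero `v_i`,
`Σ v_i = 0`, `Σ|v_i| = 1` and `(v_1,…,v_{k-1})` NOT linearly independent, then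
`μ` is not extremal in the TV unit ball of zero-mass vector measures: it is a
nontrivial convex combination of two distinct elements of the ball. -/
theorem not_extremal_of_dependent (d : ℕ) (Ω : Set (EuclideanSpace ℝ (Fin d)))
    (hΩ : IsCompact Ω) (k : ℕ)
    (x : Fin k → EuclideanSpace ℝ (Fin d)) (v : Fin k → EuclideanSpace ℝ (Fin d))
    (hxinj : Function.Injective x) (hxΩ : ∀ i, x i ∈ Ω)
    (hvne : ∀ i, v i ≠ 0) (hsum : ∑ i, v i = 0) (htv : ∑ i, ‖v i‖ = 1)
    (hdep : ¬ LinearIndependent ℝ (fun i : Fin (k - 1) => v (Fin.castLE (Nat.sub_le k 1) i)))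
    (μ : Fin d → SignedMeasure (EuclideanSpace ℝ (Fin d)))
    (hμ : ∀ j : Fin d, μ j = ∑ i, (v i j) • (Measure.dirac (x i)).toSignedMeasure) :
    ∃ ν₁ ν₂ : Fin d → SignedMeasure (EuclideanSpace ℝ (Fin d)),
      ν₁ ∈ zeroMassTVBall d Ω ∧ ν₂ ∈ zeroMassTVBall d Ω ∧ ν₁ ≠ ν₂ ∧
      ∃ t ∈ Set.Ioo (0:ℝ) 1, μ = t • ν₁ + (1 - t) • ν₂ := by
  obtain ⟨g, hg0, j₀, hgj₀⟩ := Fintype.not_linearIndependent_iff.mp hdep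
  -- k ≥ 2
  have hk1 : 1 ≤ k - 1 := j₀.pos
  have hk : 2 ≤ k := by omega
  -- extend g to Fin k by zero
  set lam : Fin k → ℝ := fun i => if h : (i : ℕ) < k - 1 then g ⟨i, h⟩ else 0 with hlam
  have hlam_cast : ∀ j : Fin (k - 1), lam (Fin.castLE (Nat.sub_le k 1) j) = g j := by
    intro j
    simp only [hlam, Fin.coe_castLE, j.isLt, dif_pos]
  have key : ∀ {M : Type} [AddCommGroup M] [Module ℝ M] (w : Fin k → M),
      ∑ i, lam i • w i = ∑ j : Fin (k - 1), g j • w (Fin.castLE (Nat.sub_le k 1) j) := by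
    intro M _ _ w
    rw [← Finset.sum_filter_add_sum_filter_not Finset.univ (fun i : Fin k => (i : ℕ) < k - 1)]
    have h2 : ∑ i ∈ Finset.univ.filter (fun i : Fin k => ¬ (i : ℕ) < k - 1), lam i • w i = 0 := by
      refine Finset.sum_eq_zero fun i hi => ?_
      simp only [Finset.mem_filter] at hi
      simp [hlam, hi.2]
    rw [h2, add_zero]
    refine Finset.sum_bij' (fun (a : Fin k) (ha : a ∈ Finset.univ.filter (fun i : Fin k => (i : ℕ) < k - 1)) =>
        (⟨(a : ℕ), by simpa using ha⟩ : Fin (k - 1)))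
      (fun (b : Fin (k - 1)) (_ : b ∈ Finset.univ) => Fin.castLE (Nat.sub_le k 1) b)
      (fun a ha => Finset.mem_univ _) (fun b hb => by simp [b.isLt]) (fun a ha => rfl)
      (fun b hb => rfl) (fun a ha => ?_)
    have ha' : (a : ℕ) < k - 1 := by simpa using ha
    congr 1
    simp [hlam, ha']
  have hlamv : ∑ i, lam i • v i = 0 := by rw [key]; exact hg0
  -- choose ε
  set S : ℝ := ∑ i, |lam i| with hS
  have hSnn : 0 ≤ S := Finset.sum_nonneg fun i _ => abs_nonneg _
  set ε : ℝ := 1 / (2 * (S + 1)) with hε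
  have hεpos : 0 < ε := by positivity
  have hεS1 : ε * (S + 1) = 1 / 2 := by rw [hε]; field_simp
  have hεS : ε * S < 1 / 2 := by nlinarith
  have hlamS : ∀ i, |lam i| ≤ S := fun i =>
    Finset.single_le_sum (fun i _ => abs_nonneg (lam i)) (Finset.mem_univ i)
  have hεlam : ∀ i, |ε * lam i| < 1 / 2 := by
    intro i
    rw [abs_mul, abs_of_pos hεpos]
    calc ε * |lam i| ≤ ε * S := by nlinarith [hlamS i]
      _ < 1 / 2 := hεS
  set c : ℝ := ∑ i, lam i * ‖v i‖ with hc
  have hvle : ∀ i, ‖v i‖ ≤ 1 := fun i =>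
    htv ▸ Finset.single_le_sum (fun i _ => norm_nonneg (v i)) (Finset.mem_univ i)
  have hcS : |c| ≤ S := by
    calc |c| ≤ ∑ i, |lam i * ‖v i‖| := Finset.abs_sum_le_sum_abs _ _
      _ ≤ ∑ i, |lam i| := Finset.sum_le_sum fun i _ => by
          rw [abs_mul, abs_of_nonneg (norm_nonneg _)]
          exact mul_le_of_le_one_right (abs_nonneg _) (hvle i)
      _ = S := rfl
  have hεc : |ε * c| < 1 / 2 := by
    rw [abs_mul, abs_of_pos hεpos]
    calc ε * |c| ≤ ε * S := by nlinarith
      _ < 1 / 2 := hεS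
  have hεc' : -(1/2) < ε * c ∧ ε * c < 1/2 := abs_lt.mp hεc
  set T₁ : ℝ := 1 + ε * c with hT₁
  set T₂ : ℝ := 1 - ε * c with hT₂
  have hT₁pos : 0 < T₁ := by rw [hT₁]; linarith [hεc'.1]
  have hT₂pos : 0 < T₂ := by rw [hT₂]; linarith [hεc'.2]
  have hT₁ne : T₁ ≠ 0 := ne_of_gt hT₁pos
  have hT₂ne : T₂ ≠ 0 := ne_of_gt hT₂pos
  have hfac₁ : ∀ i, 0 < 1 + ε * lam i := fun i => by
    have := abs_lt.mp (hεlam i); linarith [this.1]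
  have hfac₂ : ∀ i, 0 < 1 - ε * lam i := fun i => by
    have := abs_lt.mp (hεlam i); linarith [this.2]
  set u₁ : Fin k → EuclideanSpace ℝ (Fin d) := fun i => ((1 + ε * lam i) * T₁⁻¹) • v i with hu₁
  set u₂ : Fin k → EuclideanSpace ℝ (Fin d) := fun i => ((1 - ε * lam i) * T₂⁻¹) • v i with hu₂
  -- zero mass
  have hsum₁ : ∑ i, u₁ i = 0 := by
    have : ∀ i : Fin k, u₁ i = T₁⁻¹ • v i + (ε * T₁⁻¹) • (lam i • v i) := by
      intro i
      rw [hu₁]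
      simp only [smul_smul, ← add_smul]
      congr 1
      ring
    rw [Finset.sum_congr rfl fun i _ => this i, Finset.sum_add_distrib,
      ← Finset.smul_sum, ← Finset.smul_sum, hsum, hlamv, smul_zero, smul_zero, add_zero]
  have hsum₂ : ∑ i, u₂ i = 0 := by
    have : ∀ i : Fin k, u₂ i = T₂⁻¹ • v i + (-(ε * T₂⁻¹)) • (lam i • v i) := by
      intro i
      rw [hu₂]
      simp only [smul_smul, ← add_smul]
      congr 1
      ring
    rw [Finset.sum_congr rfl fun i _ => this i, Finset.sum_add_distrib,
      ← Finset.smul_sum, ← Finset.smul_sum, hsum, hlamv, smul_zero, smul_zero, add_zero]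
  -- TV
  have htv₁ : ∑ i, ‖u₁ i‖ = 1 := by
    have h1 : ∀ i : Fin k, ‖u₁ i‖ = T₁⁻¹ * ‖v i‖ + (ε * T₁⁻¹) * (lam i * ‖v i‖) := by
      intro i
      rw [hu₁]
      simp only [norm_smul, Real.norm_eq_abs]
      rw [abs_of_pos (mul_pos (hfac₁ i) (inv_pos.mpr hT₁pos))]
      ring
    rw [Finset.sum_congr rfl fun i _ => h1 i, Finset.sum_add_distrib,
      ← Finset.mul_sum, ← Finset.mul_sum, htv]
    linear_combination (inv_mul_cancel₀ hT₁ne) - T₁⁻¹ * hT₁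
  have htv₂ : ∑ i, ‖u₂ i‖ = 1 := by
    have h1 : ∀ i : Fin k, ‖u₂ i‖ = T₂⁻¹ * ‖v i‖ + (-(ε * T₂⁻¹)) * (lam i * ‖v i‖) := by
      intro i
      rw [hu₂]
      simp only [norm_smul, Real.norm_eq_abs]
      rw [abs_of_pos (mul_pos (hfac₂ i) (inv_pos.mpr hT₂pos))]
      ring
    rw [Finset.sum_congr rfl fun i _ => h1 i, Finset.sum_add_distrib,
      ← Finset.mul_sum, ← Finset.mul_sum, htv]
    linear_combination (inv_mul_cancel₀ hT₂ne) + T₂⁻¹ * hT₂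
  -- the two measures
  refine ⟨fun j => ∑ i, (u₁ i j) • (Measure.dirac (x i)).toSignedMeasure,
    fun j => ∑ i, (u₂ i j) • (Measure.dirac (x i)).toSignedMeasure,
    mem_ball_of d Ω x u₁ hxΩ hsum₁ htv₁.le,
    mem_ball_of d Ω x u₂ hxΩ hsum₂ htv₂.le, ?_, T₁ / 2, ⟨by linarith, by linarith [hεc'.2]⟩, ?_⟩
  · -- distinctness
    intro hcontra
    have heval : ∀ (i : Fin k) (j : Fin d), u₁ i j = u₂ i j := by
      intro i j
      have h2 : (∑ i', (u₁ i' j) • (Measure.dirac (x i')).toSignedMeasure) ({x i} : Set _)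
          = (∑ i', (u₂ i' j) • (Measure.dirac (x i')).toSignedMeasure) ({x i} : Set _) := by
        rw [congrFun hcontra j]
      rw [eval_sum_dirac x (fun i' => u₁ i' j) _ (measurableSet_singleton _),
        eval_sum_dirac x (fun i' => u₂ i' j) _ (measurableSet_singleton _)] at h2
      simp only [Set.mem_singleton_iff, hxinj.eq_iff] at h2
      rw [Finset.sum_ite_eq' Finset.univ i (fun i' => u₁ i' j),
        Finset.sum_ite_eq' Finset.univ i (fun i' => u₂ i' j)] at h2
      simpa using h2
    have huu : ∀ i, u₁ i = u₂ i := fun i => PiLp.ext fun j => heval i j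
    have hsc : ∀ i, (1 + ε * lam i) * T₁⁻¹ = (1 - ε * lam i) * T₂⁻¹ := by
      intro i
      have hu := huu i
      simp only [hu₁, hu₂] at hu
      have h0 : ((1 + ε * lam i) * T₁⁻¹ - (1 - ε * lam i) * T₂⁻¹) • v i = 0 := by
        rw [sub_smul, hu, sub_self]
      rcases smul_eq_zero.mp h0 with h | h
      · linarith [sub_eq_zero.mp h]
      · exact absurd h (hvne i)
    have hilast : lam ⟨k - 1, by omega⟩ = 0 := by simp [hlam]
    have hTeq : T₁ = T₂ := by
      have := hsc ⟨k - 1, by omega⟩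
      rw [hilast] at this
      simp only [mul_zero, add_zero, sub_zero, one_mul] at this
      exact inv_injective this
    have hc0 : ε * c = 0 := by rw [hT₁, hT₂] at hTeq; linarith
    have hT₁1 : T₁ = 1 := by rw [hT₁, hc0, add_zero]
    have hT₂1 : T₂ = 1 := by rw [hT₂, hc0, sub_zero]
    have := hsc (Fin.castLE (Nat.sub_le k 1) j₀)
    rw [hlam_cast j₀, hT₁1, hT₂1] at this
    simp only [inv_one, mul_one] at this
    have : ε * g j₀ = 0 := by linarith
    rcases mul_eq_zero.mp this with h | h
    · exact absurd h (ne_of_gt hεpos)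
    · exact absurd h hgj₀
  · -- convex combination
    funext j
    rw [hμ j]
    have hrhs : (((T₁ / 2) • fun j => ∑ i, (u₁ i j) • (Measure.dirac (x i)).toSignedMeasure) +
        ((1 - T₁ / 2) • fun j => ∑ i, (u₂ i j) • (Measure.dirac (x i)).toSignedMeasure)) j
        = (T₁ / 2) • (∑ i, (u₁ i j) • (Measure.dirac (x i)).toSignedMeasure)
          + (1 - T₁ / 2) • (∑ i, (u₂ i j) • (Measure.dirac (x i)).toSignedMeasure) := rfl
    rw [hrhs, Finset.smul_sum, Finset.smul_sum, ← Finset.sum_add_distrib]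
    refine Finset.sum_congr rfl fun i _ => ?_
    rw [smul_smul, smul_smul, ← add_smul]
    congr 1
    have h1t : 1 - T₁ / 2 = T₂ / 2 := by rw [hT₁, hT₂]; ring
    have hu1j : u₁ i j = ((1 + ε * lam i) * T₁⁻¹) * (v i j) := rfl
    have hu2j : u₂ i j = ((1 - ε * lam i) * T₂⁻¹) * (v i j) := rfl
    rw [h1t, hu1j, hu2j]
    field_simp
    ring
end

section
/- Let K(x,y) = -|x-y| on R^d and let X = (x_1, …, x_n) be distinct points with n ≥ 2. Let K_X be the n×n matrix with entries K(x_i, x_j), and let 1 = (1,…,1) ∈ R^n. Then for every Y ∈ R^n there exists a unique pair (γ, α) ∈ R^n × R with Σ_i γ_i = 0 such that Y = K_X γ + α·1; equivalently, the map (γ, α) ↦ K_X γ + α 1 from {γ : Σγ_i = 0} × R to R^n is a linear isomorphism. -/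
open Finset MeasureTheory Real
open scoped RealInnerProductSpace


private lemma edk_tele (b : ℕ → ℝ) {n i j : ℕ} (hij : i ≤ j) (hj : j < n) :
    ∑ k ∈ Finset.range n, (b (k+1) - b k) *
      ((if i ≤ k then (1:ℝ) else 0) - (if j ≤ k then 1 else 0))^2 = b j - b i := by
  have hsub : Finset.Ico i j ⊆ Finset.range n := fun k hk => by
    simp only [Finset.mem_Ico] at hk
    exact Finset.mem_range.2 (lt_of_lt_of_le hk.2 hj.le)
  rw [← Finset.sum_subset hsub (by
    intro k _ hk
    simp only [Finset.mem_Ico, not_and, not_lt] at hk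
    rcases le_or_gt i k with h1 | h1
    · have h2 : j ≤ k := hk h1
      simp [h1, h2]
    · have h2 : ¬ j ≤ k := fun h => absurd (le_trans hij h) (not_le.2 h1)
      simp [not_le.2 h1, h2])]
  have : ∀ k ∈ Finset.Ico i j, (b (k+1) - b k) *
      ((if i ≤ k then (1:ℝ) else 0) - (if j ≤ k then 1 else 0))^2 = b (k+1) - b k := by
    intro k hk
    simp only [Finset.mem_Ico] at hk
    simp [hk.1, not_le.2 hk.2]
  rw [Finset.sum_congr rfl this, Finset.sum_Ico_eq_sub _ hij,
    Finset.sum_range_sub, Finset.sum_range_sub]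
  ring

private lemma edk_abs (b : ℕ → ℝ) (hb : Monotone b) {n i j : ℕ} (hi : i < n) (hj : j < n) :
    |b i - b j| = ∑ k ∈ Finset.range n, (b (k+1) - b k) *
      ((if i ≤ k then (1:ℝ) else 0) - (if j ≤ k then 1 else 0))^2 := by
  rcases le_total i j with hij | hij
  · rw [abs_sub_comm, abs_of_nonneg (sub_nonneg.2 (hb hij)), ← edk_tele b hij hj]
  · rw [abs_of_nonneg (sub_nonneg.2 (hb hij)), ← edk_tele b hij hi]
    exact Finset.sum_congr rfl fun k _ => by ring

private lemma edk_quad (n : ℕ) (b g : ℕ → ℝ) (hb : Monotone b)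
    (hg : ∑ i ∈ Finset.range n, g i = 0) :
    ∑ i ∈ Finset.range n, ∑ j ∈ Finset.range n, g i * g j * |b i - b j|
      = -2 * ∑ k ∈ Finset.range n, (b (k+1) - b k) * (∑ i ∈ Finset.range (k+1), g i)^2 := by
  have hS : ∀ k ∈ Finset.range n,
      (∑ i ∈ Finset.range n, g i * (if i ≤ k then (1:ℝ) else 0)) = ∑ i ∈ Finset.range (k+1), g i := by
    intro k hk
    rw [Finset.mem_range] at hk
    rw [← Finset.sum_subset (Finset.range_subset_range.2 hk) (by
      intro i _ hik
      rw [Finset.mem_range, not_lt] at hik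
      simp [not_le.2 (Nat.lt_of_succ_le hik)])]
    exact Finset.sum_congr rfl fun i hi => by
      rw [Finset.mem_range, Nat.lt_succ_iff] at hi; simp [hi]
  calc ∑ i ∈ Finset.range n, ∑ j ∈ Finset.range n, g i * g j * |b i - b j|
      = ∑ k ∈ Finset.range n, ∑ i ∈ Finset.range n, ∑ j ∈ Finset.range n,
          (b (k+1) - b k) * (g i * g j *
            ((if i ≤ k then (1:ℝ) else 0) - (if j ≤ k then 1 else 0))^2) := by
        have step1 : ∑ i ∈ Finset.range n, ∑ j ∈ Finset.range n, g i * g j * |b i - b j|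
            = ∑ i ∈ Finset.range n, ∑ j ∈ Finset.range n, ∑ k ∈ Finset.range n,
              (b (k+1) - b k) * (g i * g j *
                ((if i ≤ k then (1:ℝ) else 0) - (if j ≤ k then 1 else 0))^2) := by
          refine Finset.sum_congr rfl fun i hi => Finset.sum_congr rfl fun j hj => ?_
          rw [edk_abs b hb (Finset.mem_range.1 hi) (Finset.mem_range.1 hj), Finset.mul_sum]
          exact Finset.sum_congr rfl fun k _ => by ring
        rw [step1]
        rw [show (∑ i ∈ Finset.range n, ∑ j ∈ Finset.range n, ∑ k ∈ Finset.range n,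
              (b (k+1) - b k) * (g i * g j *
                ((if i ≤ k then (1:ℝ) else 0) - (if j ≤ k then 1 else 0))^2))
            = ∑ i ∈ Finset.range n, ∑ k ∈ Finset.range n, ∑ j ∈ Finset.range n,
              (b (k+1) - b k) * (g i * g j *
                ((if i ≤ k then (1:ℝ) else 0) - (if j ≤ k then 1 else 0))^2)
          from Finset.sum_congr rfl fun i _ => Finset.sum_comm, Finset.sum_comm]
    _ = ∑ k ∈ Finset.range n, (b (k+1) - b k) *
          (-2 * (∑ i ∈ Finset.range n, g i * (if i ≤ k then (1:ℝ) else 0))^2) := by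
        refine Finset.sum_congr rfl fun k _ => ?_
        simp_rw [← Finset.mul_sum]
        congr 1
        have expand : ∀ i j : ℕ, g i * g j *
            ((if i ≤ k then (1:ℝ) else 0) - (if j ≤ k then 1 else 0))^2
            = (g i * (if i ≤ k then (1:ℝ) else 0)^2) * g j
              + g i * (g j * (if j ≤ k then (1:ℝ) else 0)^2)
              - 2 * ((g i * (if i ≤ k then (1:ℝ) else 0)) * (g j * (if j ≤ k then (1:ℝ) else 0))) :=
          fun i j => by ring
        simp_rw [expand]
        simp_rw [Finset.sum_sub_distrib, Finset.sum_add_distrib]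
        simp_rw [← Finset.mul_sum, ← Finset.sum_mul, hg]
        ring
    _ = -2 * ∑ k ∈ Finset.range n, (b (k+1) - b k) * (∑ i ∈ Finset.range (k+1), g i)^2 := by
        rw [Finset.mul_sum]
        exact Finset.sum_congr rfl fun k hk => by rw [hS k hk]; ring

private lemma edk_oneD {n : ℕ} (γ a : Fin n → ℝ) (hγ : ∑ i, γ i = 0) :
    (∑ i, ∑ j, γ i * γ j * |a i - a j| ≤ 0) ∧
    (Function.Injective a → γ ≠ 0 → ∑ i, ∑ j, γ i * γ j * |a i - a j| < 0) := by
  rcases Nat.eq_zero_or_pos n with hn | hn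
  · subst hn
    simp only [Finset.univ_eq_empty, Finset.sum_empty]
    exact ⟨le_refl 0, fun _ hne => absurd (Subsingleton.elim γ 0) hne⟩
  set σ := Tuple.sort a with hσ
  have hmono : Monotone (a ∘ σ) := Tuple.monotone_sort a
  have hn1 : n - 1 < n := Nat.sub_lt hn one_pos
  set b : ℕ → ℝ := fun m => a (σ ⟨min m (n-1), lt_of_le_of_lt (min_le_right _ _) hn1⟩) with hbdef
  set g : ℕ → ℝ := fun m => if h : m < n then γ (σ ⟨m, h⟩) else 0 with hgdef
  have hb' : ∀ i : Fin n, b (i : ℕ) = a (σ i) := by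
    intro i
    have hmin : min (i : ℕ) (n-1) = (i : ℕ) := min_eq_left (Nat.le_pred_of_lt i.isLt)
    simp only [hbdef]
    congr 1
    exact congrArg σ (Fin.ext hmin)
  have hg' : ∀ i : Fin n, g (i : ℕ) = γ (σ i) := by
    intro i
    simp only [hgdef, dif_pos i.isLt, Fin.eta]
  have hbmono : Monotone b := by
    intro p q hpq
    exact hmono (Fin.mk_le_mk.2 (min_le_min hpq le_rfl))
  have hgsum : ∑ m ∈ Finset.range n, g m = 0 := by
    rw [← Fin.sum_univ_eq_sum_range]
    rw [Finset.sum_congr rfl fun i _ => hg' i]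
    rw [Equiv.sum_comp σ γ]
    exact hγ
  have htrans : ∑ i, ∑ j, γ i * γ j * |a i - a j|
      = ∑ i ∈ Finset.range n, ∑ j ∈ Finset.range n, g i * g j * |b i - b j| := by
    rw [← Equiv.sum_comp σ (fun i => ∑ j, γ i * γ j * |a i - a j|)]
    rw [Finset.sum_congr rfl fun i _ =>
      (Equiv.sum_comp σ (fun j => γ (σ i) * γ j * |a (σ i) - a j|)).symm]
    rw [← Fin.sum_univ_eq_sum_range]
    refine Finset.sum_congr rfl fun i _ => ?_
    rw [← Fin.sum_univ_eq_sum_range]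
    refine Finset.sum_congr rfl fun j _ => ?_
    rw [hg' i, hg' j, hb' i, hb' j]
  rw [htrans, edk_quad n b g hbmono hgsum]
  have hterm : ∀ k ∈ Finset.range n,
      0 ≤ (b (k+1) - b k) * (∑ i ∈ Finset.range (k+1), g i)^2 := fun k _ =>
    mul_nonneg (sub_nonneg.2 (hbmono (Nat.le_succ k))) (sq_nonneg _)
  constructor
  · have := Finset.sum_nonneg hterm
    linarith
  · intro ha hne
    have hstrict : StrictMono (a ∘ σ) := hmono.strictMono_of_injective (ha.comp σ.injective)
    -- find k₀ with k₀+1 < n and partial sum nonzero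
    have hex : ∃ k, k + 1 < n ∧ (∑ i ∈ Finset.range (k+1), g i) ≠ 0 := by
      by_contra hcon
      push_neg at hcon
      have hG : ∀ k, k < n → (∑ i ∈ Finset.range (k+1), g i) = 0 := by
        intro k hk
        rcases lt_or_eq_of_le (Nat.succ_le_of_lt hk) with h | h
        · exact hcon k h
        · rw [show k + 1 = n from h]; exact hgsum
      have hzero : ∀ m, m < n → g m = 0 := by
        intro m hm
        induction m with
        | zero => simpa using hG 0 hm
        | succ p ih =>
          have h1 := hG (p+1) hm
          have h2 := hG p (Nat.lt_of_succ_lt hm)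
          rw [Finset.sum_range_succ, h2] at h1
          linarith
      obtain ⟨i, hi⟩ := Function.ne_iff.1 hne
      have : g ((σ.symm i : Fin n) : ℕ) = 0 := hzero _ (σ.symm i).isLt
      rw [hg' (σ.symm i), Equiv.apply_symm_apply] at this
      exact hi this
    obtain ⟨k₀, hk₀, hG₀⟩ := hex
    have hd : 0 < b (k₀+1) - b k₀ := by
      have e1 : b (k₀+1) = a (σ ⟨k₀+1, hk₀⟩) := hb' (⟨k₀+1, hk₀⟩ : Fin n)
      have e2 : b k₀ = a (σ ⟨k₀, Nat.lt_of_succ_lt hk₀⟩) := hb' (⟨k₀, Nat.lt_of_succ_lt hk₀⟩ : Fin n)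
      rw [e1, e2, sub_pos]
      exact hstrict (by exact Fin.mk_lt_mk.2 (Nat.lt_succ_self k₀))
    have hsq : 0 < (∑ i ∈ Finset.range (k₀+1), g i)^2 := by
      rcases lt_or_gt_of_ne hG₀ with h | h <;> nlinarith
    have hpos : 0 < ∑ k ∈ Finset.range n, (b (k+1) - b k) * (∑ i ∈ Finset.range (k+1), g i)^2 :=
      Finset.sum_pos' hterm ⟨k₀, Finset.mem_range.2 (Nat.lt_of_succ_lt hk₀), mul_pos hd hsq⟩
    linarith


private lemma edk_integrable_gauss (d : ℕ) {c : ℝ} (hc : 0 < c) :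
    Integrable (fun ω : EuclideanSpace ℝ (Fin d) => Real.exp (-c * ‖ω‖^2)) := by
  have h := (GaussianFourier.integrable_cexp_neg_mul_sq_norm_add
    (V := EuclideanSpace ℝ (Fin d)) (b := (c : ℂ)) (by simpa using hc) 0 0).norm
  refine h.congr (Filter.Eventually.of_forall fun ω => ?_)
  simp only [inner_zero_left, Complex.ofReal_zero, mul_zero, add_zero, zero_mul]
  rw [Complex.norm_exp]
  congr 1
  rw [← Complex.ofReal_pow, ← Complex.ofReal_neg, ← Complex.ofReal_mul]
  exact Complex.ofReal_re _

private lemma edk_integrable (d : ℕ) (u : EuclideanSpace ℝ (Fin d)) :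
    Integrable (fun ω : EuclideanSpace ℝ (Fin d) => |⟪u, ω⟫| * Real.exp (-(1/2) * ‖ω‖^2)) := by
  have hbase := (edk_integrable_gauss d (c := 1/4) (by norm_num)).const_mul ‖u‖
  refine hbase.mono' ?_ (Filter.Eventually.of_forall fun ω => ?_)
  · exact ((Continuous.inner continuous_const continuous_id).abs.mul
      ((continuous_const.mul (continuous_norm.pow 2)).rexp)).aestronglyMeasurable
  · rw [Real.norm_eq_abs, abs_of_nonneg (mul_nonneg (abs_nonneg _) (Real.exp_nonneg _))]
    have h1 : |⟪u, ω⟫| ≤ ‖u‖ * ‖ω‖ := abs_real_inner_le_norm u ω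
    have h2 : ‖ω‖ * Real.exp (-(1/2) * ‖ω‖^2) ≤ Real.exp (-(1/4) * ‖ω‖^2) := by
      have key : ‖ω‖ ≤ Real.exp ((1/4) * ‖ω‖^2) := by
        have := Real.add_one_le_exp ((1/4) * ‖ω‖^2)
        nlinarith [norm_nonneg ω, sq_nonneg (‖ω‖ - 2)]
      calc ‖ω‖ * Real.exp (-(1/2) * ‖ω‖^2)
          ≤ Real.exp ((1/4) * ‖ω‖^2) * Real.exp (-(1/2) * ‖ω‖^2) :=
            mul_le_mul_of_nonneg_right key (Real.exp_nonneg _)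
        _ = Real.exp (-(1/4) * ‖ω‖^2) := by rw [← Real.exp_add]; ring_nf
    calc |⟪u, ω⟫| * Real.exp (-(1/2) * ‖ω‖^2)
        ≤ (‖u‖ * ‖ω‖) * Real.exp (-(1/2) * ‖ω‖^2) :=
          mul_le_mul_of_nonneg_right h1 (Real.exp_nonneg _)
      _ = ‖u‖ * (‖ω‖ * Real.exp (-(1/2) * ‖ω‖^2)) := by ring
      _ ≤ ‖u‖ * Real.exp (-(1/4) * ‖ω‖^2) :=
          mul_le_mul_of_nonneg_left h2 (norm_nonneg u)

private lemma edk_rotation (d : ℕ) (hd : 0 < d) (u : EuclideanSpace ℝ (Fin d)) :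
    ∫ ω : EuclideanSpace ℝ (Fin d), |⟪u, ω⟫| * Real.exp (-(1/2) * ‖ω‖^2)
      = ‖u‖ * ∫ ω : EuclideanSpace ℝ (Fin d),
          |ω ⟨0, hd⟩| * Real.exp (-(1/2) * ‖ω‖^2) := by
  rcases eq_or_ne u 0 with rfl | hu
  · simp
  set i₀ : Fin d := ⟨0, hd⟩
  set v : EuclideanSpace ℝ (Fin d) := ‖u‖⁻¹ • u with hv
  have hvnorm : ‖v‖ = 1 := by
    rw [hv, norm_smul, norm_inv, norm_norm, inv_mul_cancel₀ (norm_ne_zero_iff.2 hu)]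
  have hortho : Orthonormal ℝ (({i₀} : Set (Fin d)).restrict (fun _ => v)) := by
    rw [orthonormal_iff_ite]
    rintro ⟨i, hi⟩ ⟨j, hj⟩
    rcases hi; rcases hj
    have hv1 : ⟪v, v⟫ = 1 := by
      rw [real_inner_self_eq_norm_sq, hvnorm]; norm_num
    rw [if_pos rfl]; exact hv1
  obtain ⟨B, hB⟩ := hortho.exists_orthonormalBasis_extension_of_card_eq
    (by simp [finrank_euclideanSpace_fin])
  have hBi₀ : B i₀ = v := hB i₀ rfl
  set T : EuclideanSpace ℝ (Fin d) ≃ₗᵢ[ℝ] EuclideanSpace ℝ (Fin d) := B.repr.symm with hT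
  have hmp : MeasurePreserving T volume volume := T.measurePreserving
  rw [← hmp.integral_comp T.toHomeomorph.measurableEmbedding]
  rw [← MeasureTheory.integral_const_mul]
  refine integral_congr_ae (Filter.Eventually.of_forall fun ω => ?_)
  have h1 : ⟪u, T ω⟫ = ⟪T.symm u, ω⟫ := by
    rw [← T.inner_map_map (T.symm u) ω, T.apply_symm_apply]
  have hu' : u = ‖u‖ • v := by
    rw [hv, smul_smul, mul_inv_cancel₀ (norm_ne_zero_iff.2 hu), one_smul]
  have h2 : T.symm u = ‖u‖ • B.repr v := by
    rw [hT]
    simp only [LinearIsometryEquiv.symm_symm]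
    conv_lhs => rw [hu']
    exact B.repr.map_smul _ _
  have h3 : ⟪T.symm u, ω⟫ = ‖u‖ * ω i₀ := by
    rw [h2, ← hBi₀, B.repr_self, real_inner_smul_left, EuclideanSpace.inner_single_left]
    simp
  dsimp only
  rw [h1, h3, T.norm_map]
  rw [abs_mul, abs_of_nonneg (norm_nonneg u)]
  ring

private lemma edk_strict (d n : ℕ) (x : Fin n → EuclideanSpace ℝ (Fin d))
    (hx : Function.Injective x) (γ : Fin n → ℝ) (h0 : ∑ i, γ i = 0) (hne : γ ≠ 0) :
    ∑ i, ∑ j, γ i * γ j * dist (x i) (x j) < 0 := by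
  classical
  obtain ⟨i₁, hi₁⟩ := Function.ne_iff.1 hne
  simp only [Pi.zero_apply] at hi₁
  have hj₁ : ∃ j₁ : Fin n, j₁ ≠ i₁ := by
    have hsum : ∑ j ∈ Finset.univ.erase i₁, γ j = -γ i₁ := by
      have := Finset.sum_erase_add Finset.univ γ (Finset.mem_univ i₁)
      rw [h0] at this
      linarith
    have hne' : ∑ j ∈ Finset.univ.erase i₁, γ j ≠ 0 := by
      rw [hsum]; simpa using hi₁
    obtain ⟨j₁, hj₁⟩ := Finset.nonempty_of_sum_ne_zero hne'
    exact ⟨j₁, (Finset.mem_erase.1 hj₁).1⟩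
  obtain ⟨j₁, hj₁⟩ := hj₁
  have hd : 0 < d := by
    by_contra hdle
    have hd0 : d = 0 := by omega
    subst hd0
    have : x i₁ = x j₁ := by
      apply (WithLp.equiv 2 (Fin 0 → ℝ)).injective
      funext k
      exact absurd k.isLt (by omega)
    exact hj₁ (hx this.symm)
  set i₀ : Fin d := ⟨0, hd⟩ with hi₀
  set C : ℝ := ∫ ω : EuclideanSpace ℝ (Fin d), |ω i₀| * Real.exp (-(1/2) * ‖ω‖^2) with hC
  have hCnonneg : 0 ≤ C :=
    integral_nonneg fun ω => mul_nonneg (abs_nonneg _) (Real.exp_nonneg _)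
  set F : EuclideanSpace ℝ (Fin d) → ℝ := fun ω => ∑ i, ∑ j,
    (-(γ i * γ j)) * (|⟪x i - x j, ω⟫| * Real.exp (-(1/2) * ‖ω‖^2)) with hF
  have hFint : Integrable F := by
    refine integrable_finset_sum _ fun i _ => integrable_finset_sum _ fun j _ => ?_
    exact (edk_integrable d (x i - x j)).const_mul _
  have hFval : ∫ ω, F ω = (-(∑ i, ∑ j, γ i * γ j * dist (x i) (x j))) * C := by
    rw [hF, integral_finset_sum _ fun i _ => integrable_finset_sum _ fun j _ =>
      (edk_integrable d (x i - x j)).const_mul _]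
    have : ∀ i : Fin n, ∫ ω : EuclideanSpace ℝ (Fin d), ∑ j,
        (-(γ i * γ j)) * (|⟪x i - x j, ω⟫| * Real.exp (-(1/2) * ‖ω‖^2))
        = ∑ j, -(γ i * γ j * dist (x i) (x j)) * C := by
      intro i
      rw [integral_finset_sum _ fun j _ => (edk_integrable d (x i - x j)).const_mul _]
      refine Finset.sum_congr rfl fun j _ => ?_
      rw [integral_const_mul, edk_rotation d hd (x i - x j), dist_eq_norm]
      ring
    rw [Finset.sum_congr rfl fun i _ => this i]
    simp_rw [← Finset.sum_mul, ← Finset.sum_neg_distrib]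
  have hFform : ∀ ω : EuclideanSpace ℝ (Fin d), F ω = (-(∑ i, ∑ j, γ i * γ j * |⟪x i, ω⟫ - ⟪x j, ω⟫|))
      * Real.exp (-(1/2) * ‖ω‖^2) := by
    intro ω
    rw [hF]
    simp_rw [inner_sub_left]
    have : ∀ i j : Fin n, (-(γ i * γ j)) * (|⟪x i, ω⟫ - ⟪x j, ω⟫| * Real.exp (-(1/2) * ‖ω‖^2))
        = -(γ i * γ j * |⟪x i, ω⟫ - ⟪x j, ω⟫|) * Real.exp (-(1/2) * ‖ω‖^2) :=
      fun i j => by ring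
    simp_rw [this, ← Finset.sum_mul, ← Finset.sum_neg_distrib]
  have hFnonneg : ∀ ω : EuclideanSpace ℝ (Fin d), 0 ≤ F ω := by
    intro ω
    rw [hFform ω]
    have := (edk_oneD γ (fun i => ⟪x i, ω⟫) h0).1
    have h2 : 0 ≤ -(∑ i, ∑ j, γ i * γ j * |⟪x i, ω⟫ - ⟪x j, ω⟫|) := by
      linarith
    exact mul_nonneg h2 (Real.exp_nonneg _)
  have hFcont : Continuous F := by
    refine continuous_finset_sum _ fun i _ => continuous_finset_sum _ fun j _ => ?_
    exact continuous_const.mul (((Continuous.inner continuous_const continuous_id).abs).mul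
      ((continuous_const.mul (continuous_norm.pow 2)).rexp))
  -- find a point where all inner products are distinct
  set Bad : Set (EuclideanSpace ℝ (Fin d)) := ⋃ p : Fin n × Fin n,
    {ω : EuclideanSpace ℝ (Fin d) | p.1 ≠ p.2 ∧ ⟪x p.1 - x p.2, ω⟫ = 0} with hBad
  have hnull : volume Bad = 0 := by
    refine measure_iUnion_null fun p => ?_
    by_cases hp : p.1 = p.2
    · have : {ω : EuclideanSpace ℝ (Fin d) | p.1 ≠ p.2 ∧ ⟪x p.1 - x p.2, ω⟫ = 0} = ∅ := by
        ext ω; simp [hp]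
      rw [this]; exact measure_empty
    · have hvne : x p.1 - x p.2 ≠ 0 := sub_ne_zero.2 fun h => hp (hx h)
      have hker : LinearMap.ker (innerSL ℝ (x p.1 - x p.2) : EuclideanSpace ℝ (Fin d) →ₗ[ℝ] ℝ) ≠ ⊤ := by
        intro h
        have hv : (x p.1 - x p.2) ∈ LinearMap.ker (innerSL ℝ (x p.1 - x p.2) : EuclideanSpace ℝ (Fin d) →ₗ[ℝ] ℝ) := by
          rw [h]; exact Submodule.mem_top
        rw [LinearMap.mem_ker] at hv
        have : ⟪x p.1 - x p.2, x p.1 - x p.2⟫ = 0 := hv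
        exact hvne (inner_self_eq_zero.1 this)
      refine measure_mono_null (fun ω hω => ?_)
        (Measure.addHaar_submodule volume (LinearMap.ker (innerSL ℝ (x p.1 - x p.2) : EuclideanSpace ℝ (Fin d) →ₗ[ℝ] ℝ)) hker)
      exact hω.2
  have hex : ∃ ω₀ : EuclideanSpace ℝ (Fin d), ω₀ ∉ Bad := by
    by_contra hcon
    push_neg at hcon
    have hsub : (Set.univ : Set (EuclideanSpace ℝ (Fin d))) ⊆ Bad := fun ω _ => hcon ω
    have h2 : volume (Set.univ : Set (EuclideanSpace ℝ (Fin d))) ≤ volume Bad :=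
      measure_mono hsub
    rw [hnull] at h2
    have hpos : 0 < volume (Set.univ : Set (EuclideanSpace ℝ (Fin d))) :=
      isOpen_univ.measure_pos volume ⟨0, trivial⟩
    exact absurd (le_antisymm h2 zero_le) hpos.ne'
  obtain ⟨ω₀, hω₀⟩ := hex
  have hainj : Function.Injective (fun i => (⟪x i, ω₀⟫ : ℝ)) := by
    intro i j hij
    by_contra hne'
    apply hω₀
    rw [hBad]
    refine Set.mem_iUnion.2 ⟨(i, j), hne', ?_⟩
    rw [inner_sub_left]
    exact sub_eq_zero_of_eq (by simpa using hij)
  have hFpos : 0 < F ω₀ := by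
    rw [hFform ω₀]
    have := (edk_oneD γ (fun i => ⟪x i, ω₀⟫) h0).2 hainj hne
    have h2 : 0 < -(∑ i, ∑ j, γ i * γ j * |⟪x i, ω₀⟫ - ⟪x j, ω₀⟫|) := by
      linarith
    exact mul_pos h2 (Real.exp_pos _)
  have hIpos : 0 < ∫ ω, F ω := by
    rw [integral_pos_iff_support_of_nonneg hFnonneg hFint]
    refine (hFcont.isOpen_support).measure_pos volume ⟨ω₀, ?_⟩
    exact hFpos.ne'
  rw [hFval] at hIpos
  by_contra hq
  push_neg at hq
  nlinarith

/-- Interpolation parametrization for the Energy-Distance kernel with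
`P = P_0`: for distinct points `x_1,…,x_n` (`n ≥ 2`), every `Y ∈ ℝ^n` is
uniquely written as `Y = K_X γ + α·1` with `Σ_i γ_i = 0`; i.e. the map
`(γ, α) ↦ K_X γ + α·1` from the zero-sum hyperplane times `ℝ` to `ℝ^n` is a
linear isomorphism. -/
theorem ed_kernel_interpolation_parametrization (d n : ℕ) (hn : 2 ≤ n)
    (x : Fin n → EuclideanSpace ℝ (Fin d)) (hx : Function.Injective x)
    (Y : Fin n → ℝ) :
    ∃! p : (Fin n → ℝ) × ℝ,
      (∑ i, p.1 i = 0) ∧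
      ∀ i, Y i = (∑ j, (-(dist (x i) (x j))) * p.1 j) + p.2 := by
  classical
  have hnz : NeZero n := ⟨by omega⟩
  set K : Fin n → Fin n → ℝ := fun i j => -(dist (x i) (x j)) with hK
  let F : ((Fin n → ℝ) × ℝ) →ₗ[ℝ] ((Fin n → ℝ) × ℝ) :=
    { toFun := fun p => (fun i => (∑ j, K i j * p.1 j) + p.2, ∑ i, p.1 i)
      map_add' := by
        intro p q
        refine Prod.ext ?_ ?_
        · funext i
          simp only [Prod.fst_add, Pi.add_apply, Prod.snd_add, mul_add,
            Finset.sum_add_distrib]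
          ring
        · simp only [Prod.fst_add, Pi.add_apply, Prod.snd_add, Finset.sum_add_distrib]
      map_smul' := by
        intro c p
        refine Prod.ext (funext fun i => ?_) ?_
        · show (∑ j, K i j * (c • p).1 j) + (c • p).2 = c * ((∑ j, K i j * p.1 j) + p.2)
          simp only [Prod.smul_fst, Prod.smul_snd, Pi.smul_apply, smul_eq_mul, mul_add,
            Finset.mul_sum]
          exact congrArg₂ (· + ·) (Finset.sum_congr rfl fun j _ => by ring) rfl
        · show ∑ i, (c • p).1 i = c * ∑ i, p.1 i
          simp only [Prod.smul_fst, Pi.smul_apply, smul_eq_mul, Finset.mul_sum] }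
  have hFapply : ∀ p : (Fin n → ℝ) × ℝ,
      F p = (fun i => (∑ j, K i j * p.1 j) + p.2, ∑ i, p.1 i) := fun p => rfl
  have hinj : Function.Injective F := by
    rw [← LinearMap.ker_eq_bot]
    rw [LinearMap.ker_eq_bot']
    intro p hp
    rw [hFapply] at hp
    have h1 : ∀ i, (∑ j, K i j * p.1 j) + p.2 = 0 := fun i => by
      have := congrArg Prod.fst hp
      exact congrFun this i
    have h2 : ∑ i, p.1 i = 0 := congrArg Prod.snd hp
    have hquad : ∑ i, ∑ j, p.1 i * p.1 j * K i j = 0 := by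
      have hq : ∑ i, p.1 i * ((∑ j, K i j * p.1 j) + p.2) = 0 := by
        simp only [h1]
        simp
      have hexp : ∑ i, p.1 i * ((∑ j, K i j * p.1 j) + p.2)
          = (∑ i, ∑ j, p.1 i * p.1 j * K i j) + (∑ i, p.1 i) * p.2 := by
        simp_rw [mul_add, Finset.sum_add_distrib, Finset.mul_sum, ← Finset.sum_mul]
        refine congrArg₂ (· + ·) ?_ rfl
        exact Finset.sum_congr rfl fun i _ => Finset.sum_congr rfl fun j _ => by ring
      rw [hexp, h2, zero_mul, add_zero] at hq
      exact hq
    have hγ0 : p.1 = 0 := by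
      by_contra hne
      have hstrict := edk_strict d n x hx p.1 h2 hne
      have : ∑ i, ∑ j, p.1 i * p.1 j * K i j
          = -(∑ i, ∑ j, p.1 i * p.1 j * dist (x i) (x j)) := by
        rw [← Finset.sum_neg_distrib]
        refine Finset.sum_congr rfl fun i _ => ?_
        rw [← Finset.sum_neg_distrib]
        exact Finset.sum_congr rfl fun j _ => by rw [hK]; ring
      rw [this] at hquad
      have : ∑ i, ∑ j, p.1 i * p.1 j * dist (x i) (x j) = 0 := by linarith
      linarith
    have hα0 : p.2 = 0 := by
      have := h1 ⟨0, by omega⟩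
      rw [hγ0] at this
      simpa using this
    exact Prod.ext hγ0 hα0
  have hsurj : Function.Surjective F := LinearMap.injective_iff_surjective.1 hinj
  obtain ⟨p, hp⟩ := hsurj (Y, 0)
  rw [hFapply] at hp
  have hp1 : ∀ i, (∑ j, K i j * p.1 j) + p.2 = Y i := fun i =>
    congrFun (congrArg Prod.fst hp) i
  have hp2 : ∑ i, p.1 i = 0 := congrArg Prod.snd hp
  refine ⟨p, ⟨hp2, fun i => (hp1 i).symm⟩, ?_⟩
  rintro q ⟨hq2, hq1⟩
  apply hinj
  rw [hFapply, hFapply, hp]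
  refine Prod.ext ?_ ?_
  · funext i
    exact (hq1 i).symm
  · simpa using hq2
end
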